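/- arXiv:1509.08325 — 9 statements merged into one kernel-verified Lean document; each statement's English description precedes it below -/
import Mathlib

section
/- Let (x_n)_{n≥1} be a sequence of natural numbers with x_1 ≥ 2, and let (g_n)_{n≥1} be a sequence of natural numbers such that x_{n+1} = x_n² + g_n and g_n ≤ x_n for all n ≥ 1. Then the sequence ln(ln x_n)/n converges to ln 2 as n → ∞. -/
open Filter Real

/-- Auxiliary: `((n-1)·log 2 + A)/n → log 2`. -/
lemma aux_tendsto_linear (A : ℝ) :
    Tendsto (fun n : ℕ => (((n : ℝ) - 1) * Real.log 2 + A) / n) atTop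
      (nhds (Real.log 2)) := by
  have h : Tendsto (fun n : ℕ => Real.log 2 + (A - Real.log 2) / n) atTop
      (nhds (Real.log 2)) := by
    have h0 := tendsto_const_div_atTop_nhds_zero_nat (A - Real.log 2)
    have h1 : Tendsto (fun _ : ℕ => Real.log 2) atTop (nhds (Real.log 2)) :=
      tendsto_const_nhds
    simpa using h1.add h0
  refine h.congr' ?_
  filter_upwards [eventually_ge_atTop 1] with n hn
  have hn0 : (n : ℝ) ≠ 0 := by positivity
  field_simp
  ring

/-- If a sequence of natural numbers satisfies `x 1 ≥ 2` and the nonlinear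
recurrence `x (n+1) = (x n)^2 + g n` with `g n ≤ x n` for all `n ≥ 1`, then
`ln(ln x_n)/n → ln 2`. -/
theorem loglog_div_tendsto_log_two_of_quadratic_recurrence
    (x g : ℕ → ℕ) (hx1 : 2 ≤ x 1)
    (hrec : ∀ n : ℕ, 1 ≤ n → x (n + 1) = (x n) ^ 2 + g n)
    (hg : ∀ n : ℕ, 1 ≤ n → g n ≤ x n) :
    Tendsto (fun n : ℕ => Real.log (Real.log (x n)) / n) atTop (nhds (Real.log 2)) := by
  set c : ℝ := Real.log (x 1) with hc
  have hlog2 : (0 : ℝ) < Real.log 2 := Real.log_pos (by norm_num)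
  have hc2 : Real.log 2 ≤ c := by
    apply Real.log_le_log (by norm_num)
    exact_mod_cast hx1
  have hcpos : 0 < c := lt_of_lt_of_le hlog2 hc2
  -- x n ≥ 2 for n ≥ 1
  have hx2 : ∀ n, 1 ≤ n → 2 ≤ x n := by
    intro n hn
    induction n with
    | zero => omega
    | succ m ih =>
      rcases Nat.lt_or_ge 1 (m + 1) with h | h
      · have hm : 1 ≤ m := by omega
        have := ih hm
        have hr := hrec m hm
        nlinarith [hr, this]
      · have : m = 0 := by omega
        subst this; exact hx1
  -- key bounds on log (x (n+1))
  have key : ∀ n : ℕ, (2 : ℝ) ^ n * c ≤ Real.log (x (n + 1)) ∧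
      Real.log (x (n + 1)) ≤ 2 ^ n * (c + 1) - 1 := by
    intro n
    induction n with
    | zero => constructor <;> simp [hc]
    | succ m ih =>
      obtain ⟨ihl, ihu⟩ := ih
      have h1 : 1 ≤ m + 1 := by omega
      have hx := hx2 (m + 1) h1
      have hxpos : (0 : ℝ) < (x (m + 1) : ℝ) := by
        have : 0 < x (m + 1) := by omega
        exact_mod_cast this
      constructor
      · have hle : ((x (m + 1)) ^ 2 : ℕ) ≤ x (m + 2) := by
          rw [hrec (m + 1) h1]; omega
        have : Real.log ((x (m + 1) : ℝ) ^ 2) ≤ Real.log (x (m + 2)) := by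
          apply Real.log_le_log (by positivity)
          exact_mod_cast hle
        rw [Real.log_pow] at this
        push_cast at this
        calc (2 : ℝ) ^ (m + 1) * c = 2 * ((2 : ℝ) ^ m * c) := by ring
        _ ≤ 2 * Real.log (x (m + 1)) := by linarith
        _ ≤ Real.log (x (m + 2)) := by linarith
      · have hle : x (m + 2) ≤ 2 * (x (m + 1)) ^ 2 := by
          rw [hrec (m + 1) h1]
          have := hg (m + 1) h1
          nlinarith [hx]
        have hlog : Real.log (x (m + 2)) ≤ Real.log (2 * (x (m + 1) : ℝ) ^ 2) := by
          apply Real.log_le_log (by have := hx2 (m + 2) (by omega); positivity)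
          exact_mod_cast hle
        rw [Real.log_mul (by norm_num) (by positivity), Real.log_pow] at hlog
        push_cast at hlog
        have hl21 : Real.log 2 ≤ 1 := by
          have := Real.log_le_sub_one_of_pos (by norm_num : (0:ℝ) < 2)
          linarith
        calc Real.log (x (m + 2)) ≤ Real.log 2 + 2 * Real.log (x (m + 1)) := hlog
        _ ≤ Real.log 2 + 2 * (2 ^ m * (c + 1) - 1) := by linarith
        _ ≤ 2 ^ (m + 1) * (c + 1) - 1 := by ring_nf; linarith
  -- squeeze
  apply tendsto_of_tendsto_of_tendsto_of_le_of_le' (aux_tendsto_linear (Real.log c))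
    (aux_tendsto_linear (Real.log (c + 1)))
  · filter_upwards [eventually_ge_atTop 1] with n hn
    obtain ⟨m, rfl⟩ : ∃ m, n = m + 1 := ⟨n - 1, by omega⟩
    obtain ⟨hl, _⟩ := key m
    have hypos : 0 < (2 : ℝ) ^ m * c := by positivity
    have : Real.log ((2 : ℝ) ^ m * c) ≤ Real.log (Real.log (x (m + 1))) :=
      Real.log_le_log hypos hl
    rw [Real.log_mul (by positivity) (ne_of_gt hcpos), Real.log_pow] at this
    apply div_le_div_of_nonneg_right ?_ (by positivity)
    push_cast
    -- cast done
    linarith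
  · filter_upwards [eventually_ge_atTop 1] with n hn
    obtain ⟨m, rfl⟩ : ∃ m, n = m + 1 := ⟨n - 1, by omega⟩
    obtain ⟨hl, hu⟩ := key m
    have hypos : 0 < Real.log (x (m + 1)) :=
      lt_of_lt_of_le (by positivity) hl
    have hu' : Real.log (x (m + 1)) ≤ 2 ^ m * (c + 1) := by linarith
    have : Real.log (Real.log (x (m + 1))) ≤ Real.log ((2 : ℝ) ^ m * (c + 1)) :=
      Real.log_le_log hypos hu'
    rw [Real.log_mul (by positivity) (by positivity), Real.log_pow] at this
    apply div_le_div_of_nonneg_right ?_ (by positivity)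
    push_cast
    -- cast done
    linarith
end

section
/- Let B ⊆ A × A × A be a basic set such that F dominates G, and suppose either (i) (1,1,1) ∈ B and n_F ≥ 2, or (ii) (1,1,1) ∉ B and both n_F ≥ 2 and n_G ≥ 2. Then the entropy limit exists and h(B) = ln 2, i.e., ln(ln c_n)/n → ln 2 as n → ∞. -/
open Filter Real

/-- The set of `n`-blocks of the binary Markov tree-shift over the alphabet `Fin 2`
(symbols `0,1` standing for `1,2`) with basic set `B` of 2-blocks `(i,j,k)`:
labelings of the binary words of length `< n` such that every node `v` of length
`≤ n-2`, together with its children `v0` and `v1`, forms a pattern in `B`. -/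
def Block2 (B : Finset (Fin 2 × Fin 2 × Fin 2)) (n : ℕ) :
    Set ({w : List (Fin 2) // w.length < n} → Fin 2) :=
  {u | ∀ (v : List (Fin 2)) (h : v.length + 2 ≤ n),
    (u ⟨v, by omega⟩,
     u ⟨v ++ [0], by simp; omega⟩,
     u ⟨v ++ [1], by simp; omega⟩) ∈ B}

/-- The `n`-blocks whose root is labeled `i`. -/
def BlockRoot2 (B : Finset (Fin 2 × Fin 2 × Fin 2)) (i : Fin 2) (n : ℕ) :
    Set ({w : List (Fin 2) // w.length < n} → Fin 2) :=
  {u | u ∈ Block2 B n ∧ ∀ h : 0 < n, u ⟨[], by simpa using h⟩ = i}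

/-- `n_F`: the number of pairs `(j,k)` with `(1,j,k) ∈ B` (symbol `1` is `0 : Fin 2`). -/
def nF (B : Finset (Fin 2 × Fin 2 × Fin 2)) : ℕ :=
  (Finset.univ.filter fun jk : Fin 2 × Fin 2 => (0, jk.1, jk.2) ∈ B).card

/-- `n_G`: the number of pairs `(j,k)` with `(2,j,k) ∈ B` (symbol `2` is `1 : Fin 2`). -/
def nG (B : Finset (Fin 2 × Fin 2 × Fin 2)) : ℕ :=
  (Finset.univ.filter fun jk : Fin 2 × Fin 2 => (1, jk.1, jk.2) ∈ B).card

/-- `F` dominates `G`: every pattern allowed under root symbol `2` is allowed under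
root symbol `1`. -/
def FDomG (B : Finset (Fin 2 × Fin 2 × Fin 2)) : Prop :=
  ∀ jk : Fin 2 × Fin 2, (1, jk.1, jk.2) ∈ B → (0, jk.1, jk.2) ∈ B

/-- `G` dominates `F`: every pattern allowed under root symbol `1` is allowed under
root symbol `2`. -/
def GDomF (B : Finset (Fin 2 × Fin 2 × Fin 2)) : Prop :=
  ∀ jk : Fin 2 × Fin 2, (0, jk.1, jk.2) ∈ B → (1, jk.1, jk.2) ∈ B

/-! ### Auxiliary machinery -/

/-- Encoding of words of length `< n` into functions, to get finiteness and card bounds. -/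
def enc2 (n : ℕ) (w : {w : List (Fin 2) // w.length < n}) : Fin n → Fin 2 :=
  fun i => if h : (i : ℕ) < w.1.length then w.1.get ⟨i, h⟩
    else if (i : ℕ) = w.1.length then 1 else 0

lemma enc2_injective (n : ℕ) : Function.Injective (enc2 n) := by
  rintro ⟨w, hw⟩ ⟨w', hw'⟩ h
  have hlen : w.length = w'.length := by
    by_contra hne
    rcases Nat.lt_or_ge w.length w'.length with hlt | hge
    · have := congrFun h ⟨w'.length, hw'⟩
      simp [enc2, Nat.lt_irrefl, Nat.not_lt_of_ge (le_of_lt hlt),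
        (Nat.ne_of_lt hlt).symm] at this
    · have hlt : w'.length < w.length := lt_of_le_of_ne hge (Ne.symm hne)
      have := congrFun h ⟨w.length, hw⟩
      simp [enc2, Nat.lt_irrefl, Nat.not_lt_of_ge (le_of_lt hlt),
        (Nat.ne_of_lt hlt).symm] at this
  apply Subtype.ext
  apply List.ext_get hlen
  intro i hi hi'
  have := congrFun h ⟨i, lt_trans hi hw⟩
  simpa [enc2, hi, hi'] using this

instance words_finite (n : ℕ) : Finite {w : List (Fin 2) // w.length < n} :=
  Finite.of_injective (enc2 n) (enc2_injective n)

instance words_fintype' (m : ℕ) : Fintype {v : List (Fin 2) // v.length = m} :=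
  inferInstanceAs (Fintype (List.Vector (Fin 2) m))

lemma words_card_le (n : ℕ) : Nat.card {w : List (Fin 2) // w.length < n} ≤ 2 ^ n := by
  have := Nat.card_le_card_of_injective (enc2 n) (enc2_injective n)
  simpa [Nat.card_eq_fintype_card] using this

lemma words_eq_card (m : ℕ) : Nat.card {v : List (Fin 2) // v.length = m} = 2 ^ m := by
  have : Nat.card (List.Vector (Fin 2) m) = 2 ^ m := by
    simp [Nat.card_eq_fintype_card, card_vector]
  exact this

/-- Build a block of depth `m + 2` from a labeling `L` of all words (used on words
of length `≤ m`) and a choice `f` of a pair of children labels at each word of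
length exactly `m`. -/
def buildBlock (L : List (Fin 2) → Fin 2) (m : ℕ)
    (f : {v : List (Fin 2) // v.length = m} → Fin 2 × Fin 2) :
    {w : List (Fin 2) // w.length < m + 2} → Fin 2 :=
  fun w =>
    if h : w.1.length ≤ m then L w.1
    else if w.1.getLastD 0 = 0 then
      (f ⟨w.1.dropLast, by have := w.2; simp only [List.length_dropLast]; omega⟩).1
    else
      (f ⟨w.1.dropLast, by have := w.2; simp only [List.length_dropLast]; omega⟩).2

lemma buildBlock_short (L m f) (v : List (Fin 2)) (hv : v.length < m + 2)
    (hv' : v.length ≤ m) : buildBlock L m f ⟨v, hv⟩ = L v := by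
  simp [buildBlock, hv']

lemma buildBlock_concat (L m f) (v : List (Fin 2)) (hv : v.length = m) (b : Fin 2)
    (h2 : (v ++ [b]).length < m + 2) :
    buildBlock L m f ⟨v ++ [b], h2⟩
      = (if b = 0 then (f ⟨v, hv⟩).1 else (f ⟨v, hv⟩).2) := by
  have hlen : ¬ ((v ++ [b]).length ≤ m) := by simp; omega
  simp only [buildBlock, hlen, dif_neg, not_false_iff, List.getLastD_concat,
    List.dropLast_concat]

lemma buildBlock_mem (B : Finset (Fin 2 × Fin 2 × Fin 2)) (L : List (Fin 2) → Fin 2)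
    (S : Finset (Fin 2 × Fin 2))
    (hL : ∀ v, (L v, L (v ++ [0]), L (v ++ [1])) ∈ B)
    (hLS : ∀ v s, s ∈ S → (L v, s.1, s.2) ∈ B)
    (m : ℕ) (f : {v : List (Fin 2) // v.length = m} → Fin 2 × Fin 2)
    (hf : ∀ v, f v ∈ S) :
    buildBlock L m f ∈ Block2 B (m + 2) := by
  intro v hv
  have hv' : v.length ≤ m := by omega
  rcases eq_or_lt_of_le hv' with he | hlt
  · rw [buildBlock_short _ _ _ v (by omega) hv',
      buildBlock_concat L m f v he 0 (by simp; omega),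
      buildBlock_concat L m f v he 1 (by simp; omega)]
    simpa using hLS v _ (hf ⟨v, he⟩)
  · rw [buildBlock_short _ _ _ v (by omega) hv',
      buildBlock_short _ _ _ (v ++ [0]) (by simp; omega) (by simp; omega),
      buildBlock_short _ _ _ (v ++ [1]) (by simp; omega) (by simp; omega)]
    exact hL v

lemma buildBlock_injective (L : List (Fin 2) → Fin 2) (m : ℕ) :
    Function.Injective (buildBlock L m) := by
  intro f g h
  funext v
  obtain ⟨v, hv⟩ := v
  have h0 := congrFun h ⟨v ++ [0], by simp; omega⟩
  have h1 := congrFun h ⟨v ++ [1], by simp; omega⟩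
  rw [buildBlock_concat L m f v hv 0 (by simp; omega),
    buildBlock_concat L m g v hv 0 (by simp; omega)] at h0
  rw [buildBlock_concat L m f v hv 1 (by simp; omega),
    buildBlock_concat L m g v hv 1 (by simp; omega)] at h1
  simp only [if_pos rfl] at h0
  simp only [one_ne_zero, if_neg] at h1
  exact Prod.ext h0 h1

lemma block_card_upper (B : Finset (Fin 2 × Fin 2 × Fin 2)) (n : ℕ) :
    Nat.card (Block2 B n) ≤ 2 ^ 2 ^ n := by
  have h1 : Nat.card (Block2 B n)
      ≤ Nat.card ({w : List (Fin 2) // w.length < n} → Fin 2) :=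
    Nat.card_le_card_of_injective _ Subtype.val_injective
  have h2 : Nat.card ({w : List (Fin 2) // w.length < n} → Fin 2)
      = 2 ^ Nat.card {w : List (Fin 2) // w.length < n} := by
    rw [Nat.card_fun]; simp
  calc Nat.card (Block2 B n) ≤ _ := h1
    _ = _ := h2
    _ ≤ 2 ^ 2 ^ n := Nat.pow_le_pow_right (by norm_num) (words_card_le n)

lemma block_card_lower (B : Finset (Fin 2 × Fin 2 × Fin 2)) (L : List (Fin 2) → Fin 2)
    (S : Finset (Fin 2 × Fin 2)) (hS : 2 ≤ S.card)
    (hL : ∀ v, (L v, L (v ++ [0]), L (v ++ [1])) ∈ B)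
    (hLS : ∀ v s, s ∈ S → (L v, s.1, s.2) ∈ B)
    (m : ℕ) : 2 ^ 2 ^ m ≤ Nat.card (Block2 B (m + 2)) := by
  set Ψ : ({v : List (Fin 2) // v.length = m} → ↥S) → ↥(Block2 B (m + 2)) :=
    fun f => ⟨buildBlock L m (fun v => (f v : Fin 2 × Fin 2)),
      buildBlock_mem B L S hL hLS m _ (fun v => (f v).2)⟩ with hΨdef
  have hΨ : Function.Injective Ψ := by
    intro f g h
    simp only [hΨdef, Subtype.mk.injEq] at h
    have h' := buildBlock_injective L m h
    funext v
    exact Subtype.ext (congrFun h' v)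
  have hcard := Nat.card_le_card_of_injective Ψ hΨ
  have hdom : Nat.card ({v : List (Fin 2) // v.length = m} → ↥S)
      = S.card ^ 2 ^ m := by
    rw [Nat.card_fun, Nat.card_eq_finsetCard, words_eq_card]
  calc 2 ^ 2 ^ m ≤ S.card ^ 2 ^ m := Nat.pow_le_pow_left hS _
    _ = _ := hdom.symm
    _ ≤ _ := hcard

/-- If `F` dominates `G` and either (i) `(1,1,1) ∈ B` and `n_F ≥ 2`, or
(ii) `(1,1,1) ∉ B` and `n_F ≥ 2` and `n_G ≥ 2`, then the entropy limit exists and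
equals `ln 2`. -/
theorem entropy_eq_log_two_of_dominant (B : Finset (Fin 2 × Fin 2 × Fin 2))
    (hdom : FDomG B)
    (hcase : ((0, 0, 0) ∈ B ∧ 2 ≤ nF B) ∨
      ((0, 0, 0) ∉ B ∧ 2 ≤ nF B ∧ 2 ≤ nG B)) :
    Tendsto (fun n : ℕ => Real.log (Real.log (Nat.card (Block2 B n))) / n)
      atTop (nhds (Real.log 2)) := by
  -- Get the data for the lower bound.
  obtain ⟨L, S, hS, hL, hLS⟩ :
      ∃ (L : List (Fin 2) → Fin 2) (S : Finset (Fin 2 × Fin 2)), 2 ≤ S.card ∧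
        (∀ v, (L v, L (v ++ [0]), L (v ++ [1])) ∈ B) ∧
        (∀ v s, s ∈ S → (L v, s.1, s.2) ∈ B) := by
    rcases hcase with ⟨h000, hnF⟩ | ⟨_, _, hnG⟩
    · refine ⟨fun _ => 0,
        Finset.univ.filter fun jk : Fin 2 × Fin 2 => (0, jk.1, jk.2) ∈ B, hnF, ?_, ?_⟩
      · intro v; exact h000
      · intro v s hs
        exact (Finset.mem_filter.mp hs).2
    · set S : Finset (Fin 2 × Fin 2) :=
        Finset.univ.filter fun jk : Fin 2 × Fin 2 => (1, jk.1, jk.2) ∈ B with hSdef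
      have hScard : 2 ≤ S.card := hnG
      have hboth : ∀ (i : Fin 2) (s : Fin 2 × Fin 2), s ∈ S → (i, s.1, s.2) ∈ B := by
        intro i s hs
        have h1 : ((1 : Fin 2), s.1, s.2) ∈ B := (Finset.mem_filter.mp hs).2
        fin_cases i
        · exact hdom s h1
        · exact h1
      obtain ⟨p, hp⟩ : S.Nonempty := Finset.card_pos.mp (by omega)
      refine ⟨fun v => if v.getLastD 0 = 0 then p.1 else p.2, S, hScard, ?_, ?_⟩
      · intro v
        simp only [List.getLastD_concat]
        simpa using hboth _ p hp
      · intro v s hs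
        exact hboth _ s hs
  -- deduce the numeric bounds for `n ≥ 2`
  have hbounds : ∀ n : ℕ, 2 ≤ n →
      2 ^ 2 ^ (n - 2) ≤ Nat.card (Block2 B n) ∧
        Nat.card (Block2 B n) ≤ 2 ^ 2 ^ n := by
    intro n hn
    constructor
    · have := block_card_lower B L S hS hL hLS (n - 2)
      have hn' : n - 2 + 2 = n := by omega
      rwa [hn'] at this
    · exact block_card_upper B n
  -- squeeze
  have hg : Tendsto (fun n : ℕ =>
      Real.log 2 + (Real.log (Real.log 2) - 2 * Real.log 2) / n) atTop
      (nhds (Real.log 2)) := by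
    have := (tendsto_const_div_atTop_nhds_zero_nat
      (Real.log (Real.log 2) - 2 * Real.log 2)).const_add (Real.log 2)
    simpa using this
  have hh : Tendsto (fun n : ℕ =>
      Real.log 2 + Real.log (Real.log 2) / n) atTop (nhds (Real.log 2)) := by
    have := (tendsto_const_div_atTop_nhds_zero_nat
      (Real.log (Real.log 2))).const_add (Real.log 2)
    simpa using this
  refine tendsto_of_tendsto_of_tendsto_of_le_of_le' hg hh ?_ ?_
  · filter_upwards [eventually_ge_atTop 2] with n hn
    obtain ⟨h1, h2⟩ := hbounds n hn
    have hnR : (0:ℝ) < n := by exact_mod_cast Nat.lt_of_lt_of_le (by norm_num) hn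
    have hlog2 : (0:ℝ) < Real.log 2 := Real.log_pos (by norm_num)
    set c := Nat.card (Block2 B n) with hc
    have hc1 : (2:ℝ) ^ (2 ^ (n-2)) ≤ (c:ℝ) := by exact_mod_cast h1
    have hlow : (2:ℝ) ^ (n-2) * Real.log 2 ≤ Real.log c := by
      have := Real.log_le_log (by positivity) hc1
      rw [Real.log_pow] at this
      push_cast at this
      exact this
    have hll_low : ((n:ℝ) - 2) * Real.log 2 + Real.log (Real.log 2)
        ≤ Real.log (Real.log c) := by
      have := Real.log_le_log (by positivity) hlow
      rw [Real.log_mul (by positivity) (ne_of_gt hlog2), Real.log_pow] at this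
      push_cast [Nat.cast_sub hn] at this
      exact this
    have heq : Real.log 2 + (Real.log (Real.log 2) - 2 * Real.log 2) / n
        = (((n:ℝ) - 2) * Real.log 2 + Real.log (Real.log 2)) / n := by
      field_simp; ring
    rw [heq]
    gcongr
  · filter_upwards [eventually_ge_atTop 2] with n hn
    obtain ⟨h1, h2⟩ := hbounds n hn
    have hnR : (0:ℝ) < n := by exact_mod_cast Nat.lt_of_lt_of_le (by norm_num) hn
    have hlog2 : (0:ℝ) < Real.log 2 := Real.log_pos (by norm_num)
    set c := Nat.card (Block2 B n) with hc
    have hc1 : (2:ℝ) ^ (2 ^ (n-2)) ≤ (c:ℝ) := by exact_mod_cast h1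
    have hc2 : (c:ℝ) ≤ 2 ^ (2 ^ n) := by exact_mod_cast h2
    have hlow : (2:ℝ) ^ (n-2) * Real.log 2 ≤ Real.log c := by
      have := Real.log_le_log (by positivity) hc1
      rw [Real.log_pow] at this
      push_cast at this
      exact this
    have hlogc_pos : (0:ℝ) < Real.log c := lt_of_lt_of_le (by positivity) hlow
    have hhigh : Real.log c ≤ (2:ℝ) ^ n * Real.log 2 := by
      have := Real.log_le_log (lt_of_lt_of_le (by positivity) hc1) hc2
      rw [Real.log_pow] at this
      push_cast at this
      exact this
    have hll_high : Real.log (Real.log c)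
        ≤ (n:ℝ) * Real.log 2 + Real.log (Real.log 2) := by
      have := Real.log_le_log hlogc_pos hhigh
      rwa [Real.log_mul (by positivity) (ne_of_gt hlog2), Real.log_pow] at this
    have heq : Real.log 2 + Real.log (Real.log 2) / n
        = ((n:ℝ) * Real.log 2 + Real.log (Real.log 2)) / n := by
      field_simp
    rw [heq]
    gcongr
end

section
/- Let B ⊆ A × A × A be a basic set such that either ((1,1,1) ∈ B and n_F ≥ 2) or ((2,2,2) ∈ B and n_G ≥ 2). Then the entropy limit exists and h(B) = ln 2, i.e., ln(ln c_n)/n → ln 2 as n → ∞. -/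
open Filter Real

/-! ### Auxiliary material for the proof -/

instance idxFinite (n : ℕ) : Finite {w : List (Fin 2) // w.length < n} :=
  (List.finite_length_lt (Fin 2) n).to_subtype

def idxPeel (n : ℕ) : {w : List (Fin 2) // w.length < n + 1} →
    Option (Fin 2 × {w : List (Fin 2) // w.length < n})
  | ⟨[], _⟩ => none
  | ⟨b :: t, h⟩ => some (b, ⟨t, by simpa using h⟩)

lemma idxPeel_inj (n : ℕ) : Function.Injective (idxPeel n) := by
  rintro ⟨w1, h1⟩ ⟨w2, h2⟩ h
  cases w1 <;> cases w2 <;> simp_all [idxPeel]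

lemma card_idx_le (n : ℕ) : Nat.card {w : List (Fin 2) // w.length < n} ≤ 2 ^ n - 1 := by
  induction n with
  | zero =>
    have : IsEmpty {w : List (Fin 2) // w.length < 0} := ⟨fun w => by omega⟩
    simp [Nat.card_of_isEmpty]
  | succ n ih =>
    haveI : Finite (Option (Fin 2 × {w : List (Fin 2) // w.length < n})) :=
      Finite.of_equiv ((Fin 2 × {w : List (Fin 2) // w.length < n}) ⊕ PUnit.{1})
        (Equiv.optionEquivSumPUnit _).symm
    have h := Nat.card_le_card_of_injective _ (idxPeel_inj n)
    rw [Finite.card_option, Nat.card_prod, Nat.card_eq_fintype_card (α := Fin 2)] at h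
    have h2 : (1:ℕ) ≤ 2 ^ n := Nat.one_le_two_pow
    simp at h
    calc Nat.card {w : List (Fin 2) // w.length < n + 1}
        ≤ 2 * Nat.card {w : List (Fin 2) // w.length < n} + 1 := by simpa using h
    _ ≤ 2 * (2 ^ n - 1) + 1 := by omega
    _ ≤ 2 ^ (n + 1) - 1 := by rw [pow_succ]; omega

lemma block_card_le (B : Finset (Fin 2 × Fin 2 × Fin 2)) (n : ℕ) :
    Nat.card (Block2 B n) ≤ 2 ^ (2 ^ n) := by
  have hidx := card_idx_le n
  have h1 : Nat.card (Block2 B n) ≤ Nat.card ({w : List (Fin 2) // w.length < n} → Fin 2) :=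
    Nat.card_le_card_of_injective _ Subtype.val_injective
  rw [Nat.card_fun, Nat.card_eq_fintype_card (α := Fin 2), Fintype.card_fin] at h1
  exact h1.trans (Nat.pow_le_pow_right (by norm_num) (hidx.trans (Nat.sub_le _ _)))

/-- the block built from a choice function `ε` on the depth-`m` nodes. -/
def phiFun (i : Fin 2) (p : Fin 2 → Fin 2 × Fin 2) (m : ℕ)
    (ε : List.Vector (Fin 2) m → Fin 2) :
    {w : List (Fin 2) // w.length < m + 2} → Fin 2 := fun w =>
  if h : w.1.length ≤ m then i
  else if w.1.getLastD 0 = 0 then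
    (p (ε ⟨w.1.dropLast, by have := w.2; simp [List.length_dropLast]; omega⟩)).1
  else
    (p (ε ⟨w.1.dropLast, by have := w.2; simp [List.length_dropLast]; omega⟩)).2

lemma phiFun_internal (i : Fin 2) (p : Fin 2 → Fin 2 × Fin 2) (m : ℕ)
    (ε : List.Vector (Fin 2) m → Fin 2) (w : List (Fin 2)) (hw : w.length < m + 2)
    (h : w.length ≤ m) : phiFun i p m ε ⟨w, hw⟩ = i := by
  simp only [phiFun]; rw [dif_pos h]

lemma phiFun_leaf (i : Fin 2) (p : Fin 2 → Fin 2 × Fin 2) (m : ℕ)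
    (ε : List.Vector (Fin 2) m → Fin 2) (v : List (Fin 2)) (hv : v.length = m)
    (b : Fin 2) (hw : (v ++ [b]).length < m + 2) :
    phiFun i p m ε ⟨v ++ [b], hw⟩ =
      (if b = 0 then (p (ε ⟨v, hv⟩)).1 else (p (ε ⟨v, hv⟩)).2) := by
  simp only [phiFun]
  rw [dif_neg (by simp; omega)]
  simp only [List.dropLast_concat, List.getLastD_concat]

lemma phiFun_mem (B : Finset (Fin 2 × Fin 2 × Fin 2)) (i : Fin 2)
    (p : Fin 2 → Fin 2 × Fin 2) (m : ℕ)
    (hii : (i, i, i) ∈ B) (hp : ∀ a, (i, (p a).1, (p a).2) ∈ B)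
    (ε : List.Vector (Fin 2) m → Fin 2) :
    phiFun i p m ε ∈ Block2 B (m + 2) := by
  intro v hv
  rw [phiFun_internal i p m ε v (by omega) (by omega)]
  rcases Nat.lt_or_ge v.length m with hvm | hvm
  · rw [phiFun_internal i p m ε _ (by simp; omega) (by simp; omega),
      phiFun_internal i p m ε _ (by simp; omega) (by simp; omega)]
    exact hii
  · have hvm' : v.length = m := by omega
    rw [phiFun_leaf i p m ε v hvm' 0 (by simp; omega),
      phiFun_leaf i p m ε v hvm' 1 (by simp; omega)]
    simp only [if_pos rfl, if_neg (by decide : ¬((1:Fin 2) = 0))]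
    exact hp _

lemma phiFun_inj (i : Fin 2) (p : Fin 2 → Fin 2 × Fin 2) (m : ℕ)
    (hpinj : Function.Injective p) : Function.Injective (phiFun i p m) := by
  intro ε ε' h
  funext v
  obtain ⟨vl, hvl⟩ := v
  have h0 := congrFun h ⟨vl ++ [0], by simp; omega⟩
  have h1 := congrFun h ⟨vl ++ [1], by simp; omega⟩
  rw [phiFun_leaf i p m ε vl hvl 0 (by simp; omega),
      phiFun_leaf i p m ε' vl hvl 0 (by simp; omega)] at h0
  rw [phiFun_leaf i p m ε vl hvl 1 (by simp; omega),
      phiFun_leaf i p m ε' vl hvl 1 (by simp; omega)] at h1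
  simp only [if_pos rfl, if_neg (by decide : ¬((1:Fin 2) = 0))] at h0 h1
  exact hpinj (Prod.ext h0 h1)

lemma block_card_ge (B : Finset (Fin 2 × Fin 2 × Fin 2)) (i : Fin 2)
    (p : Fin 2 → Fin 2 × Fin 2)
    (hii : (i, i, i) ∈ B) (hp : ∀ a, (i, (p a).1, (p a).2) ∈ B)
    (hpinj : Function.Injective p) (m : ℕ) :
    2 ^ (2 ^ m) ≤ Nat.card (Block2 B (m + 2)) := by
  let Φ : (List.Vector (Fin 2) m → Fin 2) → (Block2 B (m + 2)) :=
    fun ε => ⟨phiFun i p m ε, phiFun_mem B i p m hii hp ε⟩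
  have hΦ : Function.Injective Φ := by
    intro a b hab
    exact phiFun_inj i p m hpinj (congrArg Subtype.val hab)
  have := Nat.card_le_card_of_injective Φ hΦ
  rwa [Nat.card_fun, Nat.card_eq_fintype_card (α := Fin 2),
    Nat.card_eq_fintype_card (α := List.Vector (Fin 2) m), Fintype.card_fin,
    card_vector, Fintype.card_fin] at this

lemma tendsto_affine (L C : ℝ) :
    Tendsto (fun n : ℕ => ((n : ℝ) * L + C) / n) atTop (nhds L) := by
  have h : Tendsto (fun n : ℕ => L + C / n) atTop (nhds (L + 0)) :=
    tendsto_const_nhds.add (tendsto_const_div_atTop_nhds_zero_nat C)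
  rw [add_zero] at h
  refine h.congr' ?_
  filter_upwards [eventually_ge_atTop 1] with n hn
  have : (n : ℝ) ≠ 0 := by positivity
  field_simp

lemma squeeze_main (c : ℕ → ℝ)
    (hlow : ∀ n : ℕ, 2 ≤ n →
      ((n:ℝ) - 2) * Real.log 2 + Real.log (Real.log 2) ≤ Real.log (Real.log (c n)))
    (hup : ∀ n : ℕ, 2 ≤ n →
      Real.log (Real.log (c n)) ≤ (n:ℝ) * Real.log 2 + Real.log (Real.log 2)) :
    Tendsto (fun n : ℕ => Real.log (Real.log (c n)) / n) atTop (nhds (Real.log 2)) := by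
  have tg : Tendsto
      (fun n : ℕ => ((n:ℝ) * Real.log 2 + (Real.log (Real.log 2) - 2 * Real.log 2)) / n)
      atTop (nhds (Real.log 2)) := tendsto_affine _ _
  have th : Tendsto (fun n : ℕ => ((n:ℝ) * Real.log 2 + Real.log (Real.log 2)) / n)
      atTop (nhds (Real.log 2)) := tendsto_affine _ _
  refine tendsto_of_tendsto_of_tendsto_of_le_of_le' tg th ?_ ?_
  · filter_upwards [eventually_ge_atTop 2] with n hn
    have h := hlow n hn
    have : ((n:ℝ) * Real.log 2 + (Real.log (Real.log 2) - 2 * Real.log 2)) =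
        ((n:ℝ) - 2) * Real.log 2 + Real.log (Real.log 2) := by ring
    rw [this]
    exact div_le_div_of_nonneg_right h (by positivity)
  · filter_upwards [eventually_ge_atTop 2] with n hn
    exact div_le_div_of_nonneg_right (hup n hn) (by positivity)

lemma loglog_lower (c : ℕ → ℝ) (hlo : ∀ m : ℕ, (2:ℝ) ^ ((2:ℕ) ^ m) ≤ c (m + 2)) :
    ∀ n : ℕ, 2 ≤ n →
      ((n:ℝ) - 2) * Real.log 2 + Real.log (Real.log 2) ≤ Real.log (Real.log (c n)) := by
  intro n hn
  obtain ⟨m, rfl⟩ : ∃ m, n = m + 2 := ⟨n - 2, by omega⟩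
  have hl2 : (0:ℝ) < Real.log 2 := Real.log_pos one_lt_two
  have hpow : (0:ℝ) < (2:ℝ) ^ ((2:ℕ) ^ m) := by positivity
  have hlog1 : (((2:ℕ) ^ m : ℕ) : ℝ) * Real.log 2 ≤ Real.log (c (m + 2)) := by
    have := Real.log_le_log hpow (hlo m)
    rwa [Real.log_pow] at this
  have hA : (0:ℝ) < (((2:ℕ) ^ m : ℕ) : ℝ) * Real.log 2 := by positivity
  have h2 := Real.log_le_log hA hlog1
  rw [Real.log_mul (by positivity) (ne_of_gt hl2)] at h2
  have h3 : Real.log (((2:ℕ) ^ m : ℕ) : ℝ) = (m : ℝ) * Real.log 2 := by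
    push_cast
    rw [Real.log_pow]
  rw [h3] at h2
  push_cast
  linarith

lemma loglog_upper (c : ℕ → ℝ) (hlo : ∀ m : ℕ, (2:ℝ) ^ ((2:ℕ) ^ m) ≤ c (m + 2))
    (hhi : ∀ n : ℕ, c n ≤ (2:ℝ) ^ ((2:ℕ) ^ n)) :
    ∀ n : ℕ, 2 ≤ n →
      Real.log (Real.log (c n)) ≤ (n:ℝ) * Real.log 2 + Real.log (Real.log 2) := by
  intro n hn
  have hl2 : (0:ℝ) < Real.log 2 := Real.log_pos one_lt_two
  obtain ⟨m, rfl⟩ : ∃ m, n = m + 2 := ⟨n - 2, by omega⟩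
  have hpow : (0:ℝ) < (2:ℝ) ^ ((2:ℕ) ^ m) := by positivity
  have hcpos : (0:ℝ) < c (m + 2) := lt_of_lt_of_le hpow (hlo m)
  have hlogpos : (0:ℝ) < Real.log (c (m + 2)) := by
    have := Real.log_le_log hpow (hlo m)
    rw [Real.log_pow] at this
    have : (0:ℝ) < (((2:ℕ) ^ m : ℕ) : ℝ) * Real.log 2 := by positivity
    linarith [Real.log_le_log hpow (hlo m), Real.log_pow ((2:ℝ)) ((2:ℕ)^m)]
  have h1 : Real.log (c (m + 2)) ≤ (((2:ℕ) ^ (m + 2) : ℕ) : ℝ) * Real.log 2 := by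
    have := Real.log_le_log hcpos (hhi (m + 2))
    rwa [Real.log_pow] at this
  have h2 := Real.log_le_log hlogpos h1
  rw [Real.log_mul (by positivity) (ne_of_gt hl2)] at h2
  have h3 : Real.log (((2:ℕ) ^ (m + 2) : ℕ) : ℝ) = ((m + 2 : ℕ) : ℝ) * Real.log 2 := by
    push_cast
    rw [Real.log_pow]
    push_cast
    ring
  rw [h3] at h2
  push_cast at h2 ⊢
  linarith

/-- If `(1,1,1) ∈ B` with `n_F ≥ 2`, or `(2,2,2) ∈ B` with `n_G ≥ 2`, then the
entropy limit exists and equals `ln 2`. -/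
theorem entropy_eq_log_two_of_square_term (B : Finset (Fin 2 × Fin 2 × Fin 2))
    (hcase : ((0, 0, 0) ∈ B ∧ 2 ≤ nF B) ∨ ((1, 1, 1) ∈ B ∧ 2 ≤ nG B)) :
    Tendsto (fun n : ℕ => Real.log (Real.log (Nat.card (Block2 B n))) / n)
      atTop (nhds (Real.log 2)) := by
  -- extract a root symbol `i` and two distinct allowed children pairs
  obtain ⟨i, hii, p, hp, hpinj⟩ :
      ∃ (i : Fin 2) (_ : (i, i, i) ∈ B) (p : Fin 2 → Fin 2 × Fin 2),
        (∀ a, (i, (p a).1, (p a).2) ∈ B) ∧ Function.Injective p := by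
    rcases hcase with ⟨hB, hn⟩ | ⟨hB, hn⟩
    · obtain ⟨a, ha, b, hb, hab⟩ := Finset.one_lt_card.mp (by omega : 1 < nF B)
      rw [Finset.mem_filter] at ha hb
      refine ⟨0, hB, ![a, b], ?_, ?_⟩
      · intro x; fin_cases x <;> simp [ha.2, hb.2]
      · intro x y h; fin_cases x <;> fin_cases y <;> simp_all
    · obtain ⟨a, ha, b, hb, hab⟩ := Finset.one_lt_card.mp (by omega : 1 < nG B)
      rw [Finset.mem_filter] at ha hb
      refine ⟨1, hB, ![a, b], ?_, ?_⟩
      · intro x; fin_cases x <;> simp [ha.2, hb.2]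
      · intro x y h; fin_cases x <;> fin_cases y <;> simp_all
  set c : ℕ → ℝ := fun n => (Nat.card (Block2 B n) : ℝ) with hc
  have hlo : ∀ m : ℕ, (2:ℝ) ^ ((2:ℕ) ^ m) ≤ c (m + 2) := by
    intro m
    have := block_card_ge B i p hii hp hpinj m
    have h2 : ((2 ^ 2 ^ m : ℕ) : ℝ) ≤ ((Nat.card (Block2 B (m+2)) : ℕ) : ℝ) := Nat.cast_le.mpr this
    push_cast at h2
    simpa [hc] using h2
  have hhi : ∀ n : ℕ, c n ≤ (2:ℝ) ^ ((2:ℕ) ^ n) := by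
    intro n
    have h2 : ((Nat.card (Block2 B n) : ℕ) : ℝ) ≤ ((2 ^ 2 ^ n : ℕ) : ℝ) :=
      Nat.cast_le.mpr (block_card_le B n)
    push_cast at h2
    simpa [hc] using h2
  exact squeeze_main c (loglog_lower c hlo) (loglog_upper c hlo hhi)
end

section
/- Let B ⊆ A × A × A be a basic set of complementary type, i.e., for every (j,k) ∈ A² at least one of (1,j,k) ∈ B or (2,j,k) ∈ B holds. Then the entropy limit exists and h(B) = ln 2, i.e., ln(ln c_n)/n → ln 2 as n → ∞. -/
open Filter Real

noncomputable instance wordsFinite (n : ℕ) : Finite {w : List (Fin 2) // w.length < n} :=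
  (List.finite_length_lt (Fin 2) n).to_subtype

/-- The number of binary words of length `< n` is at most `(n+1) * 2^n`. -/
theorem card_words_le (n : ℕ) :
    Nat.card {w : List (Fin 2) // w.length < n} ≤ (n + 1) * 2 ^ n := by
  have h : Function.Injective (fun w : {w : List (Fin 2) // w.length < n} =>
      ((⟨w.1.length, by omega⟩ : Fin (n+1)), fun i : Fin n => w.1.getD i 0)) := by
    rintro ⟨w₁, h₁⟩ ⟨w₂, h₂⟩ h
    simp only [Prod.mk.injEq, Fin.mk.injEq, funext_iff] at h
    obtain ⟨hl, hg⟩ := h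
    ext1
    apply List.ext_getElem hl
    intro i hi1 hi2
    have := hg ⟨i, by omega⟩
    simpa [List.getD_eq_getElem, hi1, hi2] using this
  calc Nat.card {w : List (Fin 2) // w.length < n}
      ≤ Nat.card (Fin (n+1) × (Fin n → Fin 2)) := Nat.card_le_card_of_injective _ h
    _ = (n+1) * 2^n := by simp [Nat.card_eq_fintype_card]

/-- Upper bound on the number of `n`-blocks. -/
theorem card_block_le (B : Finset (Fin 2 × Fin 2 × Fin 2)) (n : ℕ) :
    Nat.card (Block2 B n) ≤ 2 ^ ((n + 1) * 2 ^ n) := by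
  calc Nat.card (Block2 B n)
      ≤ Nat.card ({w : List (Fin 2) // w.length < n} → Fin 2) :=
        Nat.card_le_card_of_injective _ Subtype.val_injective
    _ = 2 ^ Nat.card {w : List (Fin 2) // w.length < n} := by
        rw [Nat.card_fun]; simp [Nat.card_eq_fintype_card]
    _ ≤ 2 ^ ((n + 1) * 2 ^ n) :=
        Nat.pow_le_pow_right (by norm_num) (card_words_le n)

/-- Extend a leaf labeling upward `k` levels using a parent-choice function `g`. -/
def extFun (g : Fin 2 → Fin 2 → Fin 2) (L : List (Fin 2) → Fin 2) :
    ℕ → List (Fin 2) → Fin 2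
  | 0, w => L w
  | (k+1), w => g (extFun g L k (w ++ [0])) (extFun g L k (w ++ [1]))

/-- Lower bound on the number of `n`-blocks when `B` is of complementary type. -/
theorem card_block_ge (B : Finset (Fin 2 × Fin 2 × Fin 2))
    (hcomp : ∀ jk : Fin 2 × Fin 2, (0, jk.1, jk.2) ∈ B ∨ (1, jk.1, jk.2) ∈ B)
    (n : ℕ) (hn : 1 ≤ n) : 2 ^ 2 ^ (n - 1) ≤ Nat.card (Block2 B n) := by
  classical
  set g : Fin 2 → Fin 2 → Fin 2 := fun a b => if (0, a, b) ∈ B then 0 else 1 with hg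
  have hgmem : ∀ a b, (g a b, a, b) ∈ B := by
    intro a b
    by_cases h : (0, a, b) ∈ B
    · simpa [hg, h] using h
    · have := (hcomp (a, b)).resolve_left h
      simpa [hg, h] using this
  set Φ : ({w : List (Fin 2) // w.length = n - 1} → Fin 2) →
      ({w : List (Fin 2) // w.length < n} → Fin 2) := fun L w =>
    extFun g (fun v => if h : v.length = n - 1 then L ⟨v, h⟩ else 0)
      (n - 1 - w.1.length) w.1 with hΦ
  have hmem : ∀ L, Φ L ∈ Block2 B n := by
    intro L v hv
    have h0 : n - 1 - v.length = (n - 1 - (v.length + 1)) + 1 := by omega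
    simp only [hΦ, Block2, Set.mem_setOf_eq]
    rw [h0]
    have e0 : (v ++ [(0:Fin 2)]).length = v.length + 1 := by simp
    have e1 : (v ++ [(1:Fin 2)]).length = v.length + 1 := by simp
    rw [e0, e1]
    exact hgmem _ _
  have hinj : Function.Injective (fun L => (⟨Φ L, hmem L⟩ : Block2 B n)) := by
    intro L₁ L₂ h
    simp only [Subtype.mk.injEq] at h
    funext w
    have hw : w.1.length < n := by omega
    have := congrFun h ⟨w.1, hw⟩
    simp only [hΦ] at this
    rw [w.2] at this
    simpa [extFun, w.2] using this
  calc (2:ℕ) ^ 2 ^ (n-1)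
      = Nat.card ({w : List (Fin 2) // w.length = n - 1} → Fin 2) := by
        have : Finite {w : List (Fin 2) // w.length = n - 1} :=
          (List.finite_length_eq (Fin 2) (n-1)).to_subtype
        rw [Nat.card_fun]
        congr 1
        · simp [Nat.card_eq_fintype_card]
        · rw [show {w : List (Fin 2) // w.length = n - 1} =
            List.Vector (Fin 2) (n-1) from rfl]
          rw [Nat.card_eq_fintype_card, card_vector]
          simp
    _ ≤ Nat.card (Block2 B n) := Nat.card_le_card_of_injective _ hinj

theorem aux_log_succ_div : Tendsto (fun n : ℕ => Real.log ((n:ℝ) + 1) / n) atTop (nhds 0) := by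
  have h1 : Tendsto (fun n : ℕ => Real.log ((n:ℝ) + 1) / ((n:ℝ) + 1)) atTop (nhds 0) :=
    Real.isLittleO_log_id_atTop.tendsto_div_nhds_zero.comp
      (tendsto_atTop_add_const_right _ 1 tendsto_natCast_atTop_atTop)
  have h2 : Tendsto (fun n : ℕ => ((n:ℝ) + 1) / n) atTop (nhds 1) := by
    have : Tendsto (fun n : ℕ => 1 + 1 / (n:ℝ)) atTop (nhds (1 + 0)) :=
      tendsto_const_nhds.add tendsto_one_div_atTop_nhds_zero_nat
    rw [add_zero] at this
    apply this.congr'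
    filter_upwards [eventually_ge_atTop 1] with n hn
    have : (n:ℝ) ≠ 0 := by positivity
    field_simp
  have := h1.mul h2
  rw [zero_mul] at this
  apply this.congr'
  filter_upwards [eventually_ge_atTop 1] with n hn
  have hn0 : (n:ℝ) ≠ 0 := by positivity
  have hn1 : (n:ℝ) + 1 ≠ 0 := by positivity
  field_simp

/-- If the basic set `B` is of complementary type (for every pair `(j,k)` at least one
of `(1,j,k)` or `(2,j,k)` is in `B`), then the entropy limit exists and equals `ln 2`. -/
theorem entropy_eq_log_two_of_complementary (B : Finset (Fin 2 × Fin 2 × Fin 2))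
    (hcomp : ∀ jk : Fin 2 × Fin 2, (0, jk.1, jk.2) ∈ B ∨ (1, jk.1, jk.2) ∈ B) :
    Tendsto (fun n : ℕ => Real.log (Real.log (Nat.card (Block2 B n))) / n)
      atTop (nhds (Real.log 2)) := by
  have hlog2 : (0:ℝ) < Real.log 2 := Real.log_pos (by norm_num)
  -- lower squeeze function
  have hlo : Tendsto (fun n : ℕ =>
      (((n:ℝ) - 1) * Real.log 2 + Real.log (Real.log 2)) / n) atTop (nhds (Real.log 2)) := by
    have h : Tendsto (fun n : ℕ =>
        Real.log 2 + (Real.log (Real.log 2) - Real.log 2) * (1 / (n:ℝ))) atTop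
        (nhds (Real.log 2 + (Real.log (Real.log 2) - Real.log 2) * 0)) :=
      tendsto_const_nhds.add (tendsto_const_nhds.mul tendsto_one_div_atTop_nhds_zero_nat)
    rw [mul_zero, add_zero] at h
    apply h.congr'
    filter_upwards [eventually_ge_atTop 1] with n hn
    have hn0 : (n:ℝ) ≠ 0 := by positivity
    field_simp
    ring
  -- upper squeeze function
  have hhi : Tendsto (fun n : ℕ =>
      ((n:ℝ) * Real.log 2 + Real.log ((n:ℝ) + 1) + Real.log (Real.log 2)) / n) atTop
      (nhds (Real.log 2)) := by
    have h : Tendsto (fun n : ℕ =>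
        Real.log 2 + Real.log ((n:ℝ) + 1) / n + Real.log (Real.log 2) * (1 / (n:ℝ))) atTop
        (nhds (Real.log 2 + 0 + Real.log (Real.log 2) * 0)) :=
      (tendsto_const_nhds.add aux_log_succ_div).add
        (tendsto_const_nhds.mul tendsto_one_div_atTop_nhds_zero_nat)
    rw [mul_zero, add_zero, add_zero] at h
    apply h.congr'
    filter_upwards [eventually_ge_atTop 1] with n hn
    have hn0 : (n:ℝ) ≠ 0 := by positivity
    field_simp
  apply tendsto_of_tendsto_of_tendsto_of_le_of_le' hlo hhi
  · -- lower bound eventually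
    filter_upwards [eventually_ge_atTop 1] with n hn
    set c : ℝ := (Nat.card (Block2 B n) : ℝ) with hc
    have hcge : (2:ℝ) ^ (2 ^ (n-1) : ℕ) ≤ c := by
      rw [hc]; exact_mod_cast card_block_ge B hcomp n hn
    have hcpos : (0:ℝ) < c := lt_of_lt_of_le (by positivity) hcge
    have hlogc_ge : ((2:ℝ) ^ (n-1 : ℕ)) * Real.log 2 ≤ Real.log c := by
      have := Real.log_le_log (by positivity) hcge
      rwa [Real.log_pow, ← Nat.cast_ofNat (n := 2), Nat.cast_pow] at this
    have hkey : (0:ℝ) < ((2:ℝ) ^ (n-1 : ℕ)) * Real.log 2 := by positivity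
    have hloglogc_ge : Real.log (((2:ℝ) ^ (n-1 : ℕ)) * Real.log 2)
        ≤ Real.log (Real.log c) := Real.log_le_log hkey hlogc_ge
    have heq : Real.log (((2:ℝ) ^ (n-1 : ℕ)) * Real.log 2)
        = ((n:ℝ) - 1) * Real.log 2 + Real.log (Real.log 2) := by
      rw [Real.log_mul (by positivity) (ne_of_gt hlog2), Real.log_pow,
        Nat.cast_sub hn, Nat.cast_one]
    rw [heq] at hloglogc_ge
    have hn0 : (0:ℝ) < (n:ℝ) := by positivity
    exact div_le_div_of_nonneg_right hloglogc_ge hn0.le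
  · -- upper bound eventually
    filter_upwards [eventually_ge_atTop 1] with n hn
    set c : ℝ := (Nat.card (Block2 B n) : ℝ) with hc
    have hcge : (2:ℝ) ^ (2 ^ (n-1) : ℕ) ≤ c := by
      rw [hc]; exact_mod_cast card_block_ge B hcomp n hn
    have hcle : c ≤ (2:ℝ) ^ ((n+1) * 2^n : ℕ) := by
      rw [hc]; exact_mod_cast card_block_le B n
    have hcpos : (0:ℝ) < c := lt_of_lt_of_le (by positivity) hcge
    have hc1 : (2:ℝ) ≤ c := by
      calc (2:ℝ) = 2 ^ 1 := (pow_one 2).symm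
        _ ≤ (2:ℝ) ^ (2 ^ (n-1) : ℕ) := by
            apply pow_le_pow_right₀ (by norm_num)
            exact Nat.one_le_two_pow
        _ ≤ c := hcge
    have hlogc_pos : (0:ℝ) < Real.log c := Real.log_pos (by linarith)
    have hlogc_le : Real.log c ≤ (((n:ℝ)+1) * 2^n) * Real.log 2 := by
      have := Real.log_le_log hcpos hcle
      rwa [Real.log_pow, Nat.cast_mul, Nat.cast_add, Nat.cast_one, Nat.cast_pow,
        Nat.cast_ofNat] at this
    have hloglogc_le : Real.log (Real.log c)
        ≤ Real.log ((((n:ℝ)+1) * 2^n) * Real.log 2) :=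
      Real.log_le_log hlogc_pos hlogc_le
    have heq : Real.log ((((n:ℝ)+1) * 2^n) * Real.log 2)
        = (n:ℝ) * Real.log 2 + Real.log ((n:ℝ) + 1) + Real.log (Real.log 2) := by
      rw [Real.log_mul (by positivity) (ne_of_gt hlog2),
        Real.log_mul (by positivity) (by positivity), Real.log_pow]
      ring
    rw [heq] at hloglogc_le
    have hn0 : (0:ℝ) < (n:ℝ) := by positivity
    exact div_le_div_of_nonneg_right hloglogc_le hn0.le
end

section
/- Let l ≥ 1, let p > p_1 > p_2 > ⋯ > p_l ≥ 0 be integers, let k_1,…,k_l be positive integers, and let ρ be the largest real root of the polynomial x^p − k_1 x^{p_1} − ⋯ − k_l x^{p_l} (equivalently, the unique positive real solution of 1 = Σ_{j=1}^l k_j x^{−(p−p_j)}). Then there exist integers d ≥ 2 and k ≥ 2 and a basic set B ⊆ A × A^d over an alphabet A of size k such that the entropy limit of X^B exists and equals ln ρ, i.e., ln(ln |B_n(X^B)|)/n → ln ρ as n → ∞. -/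
open Filter Real

def Block (d k : ℕ) (B : Finset (Fin k × (Fin d → Fin k))) (n : ℕ) :
    Set ({w : List (Fin d) // w.length < n} → Fin k) :=
  {u | ∀ (v : List (Fin d)) (h : v.length + 2 ≤ n),
    (u ⟨v, by omega⟩, fun j => u ⟨v ++ [j], by simp; omega⟩) ∈ B}

def BlockRoot (d k : ℕ) (B : Finset (Fin k × (Fin d → Fin k))) (i : Fin k) (n : ℕ) :
    Set ({w : List (Fin d) // w.length < n} → Fin k) :=
  {u | u ∈ Block d k B n ∧ ∀ h : 0 < n, u ⟨[], by simpa using h⟩ = i}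


instance finWords (d n : ℕ) : Finite {w : List (Fin d) // w.length < n} := by
  apply Finite.of_injective (fun w : {w : List (Fin d) // w.length < n} =>
    (fun i : Fin n => w.1[(i : ℕ)]?))
  intro w1 w2 h
  apply Subtype.ext
  apply List.ext_getElem?
  intro m
  by_cases hm : m < n
  · exact congrFun h ⟨m, hm⟩
  · rw [List.getElem?_eq_none (by omega), List.getElem?_eq_none (by omega)]

section counting

variable {d k : ℕ} (allow : Fin k → Fin d → Finset (Fin k))

def BSet : Finset (Fin k × (Fin d → Fin k)) :=
  Finset.univ.filter (fun q => ∀ pos, q.2 pos ∈ allow q.1 pos)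

lemma mem_BSet {i : Fin k} {w : Fin d → Fin k} :
    (i, w) ∈ BSet allow ↔ ∀ pos, w pos ∈ allow i pos := by
  simp [BSet]

lemma card_blockRoot_one (B : Finset (Fin k × (Fin d → Fin k))) (i : Fin k) :
    Nat.card (BlockRoot d k B i 1) = 1 := by
  have : BlockRoot d k B i 1 = {fun _ => i} := by
    ext u
    constructor
    · rintro ⟨-, hroot⟩
      funext w
      obtain ⟨l, hl⟩ := w
      match l, hl with
      | [], hl => exact hroot one_pos
    · rintro rfl
      refine ⟨fun v h => absurd h (by omega), fun _ => rfl⟩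
  rw [this]
  simp

def blockEquiv (i : Fin k) (n : ℕ) :
    (BlockRoot d k (BSet allow) i (n + 2)) ≃
      ∀ pos : Fin d, {g : {w : List (Fin d) // w.length < n + 1} → Fin k //
        g ∈ Block d k (BSet allow) (n + 1) ∧ g ⟨[], Nat.succ_pos n⟩ ∈ allow i pos} where
  toFun u pos :=
    ⟨fun v => u.1 ⟨pos :: v.1, by simpa using v.2⟩, by
      intro v hv
      exact u.2.1 (pos :: v) (by simpa using hv), by
      have hc := u.2.1 [] (by simp)
      rw [u.2.2 (by omega)] at hc
      exact (mem_BSet allow).1 hc pos⟩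
  invFun f :=
    ⟨fun w => match w with
      | ⟨[], _⟩ => i
      | ⟨pos :: v, h⟩ => (f pos).1 ⟨v, by simpa using Nat.lt_of_succ_lt_succ h⟩, by
      constructor
      · intro v hv
        match v, hv with
        | [], hv =>
          refine (mem_BSet allow).2 ?_
          intro pos
          exact (f pos).2.2
        | pos :: v', hv =>
          exact (f pos).2.1 v' (by simpa using hv)
      · intro _
        rfl⟩
  left_inv u := by
    apply Subtype.ext
    funext w
    obtain ⟨l, hl⟩ := w
    match l, hl with
    | [], hl => exact (u.2.2 (by omega)).symm
    | pos :: v, hl => rfl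
  right_inv f := by
    funext pos
    apply Subtype.ext
    funext v
    rfl

lemma nat_card_sigma {ι : Type*} [Fintype ι] (f : ι → Type*) [∀ i, Finite (f i)] :
    Nat.card (Σ i, f i) = ∑ i, Nat.card (f i) := by
  have := fun i => Fintype.ofFinite (f i)
  simp [Nat.card_eq_fintype_card]

end counting

section counting2

variable {d k : ℕ} (allow : Fin k → Fin d → Finset (Fin k))

lemma card_filter_root (B : Finset (Fin k × (Fin d → Fin k))) (S : Finset (Fin k)) (n : ℕ) :
    Nat.card {g : {w : List (Fin d) // w.length < n + 1} → Fin k //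
        g ∈ Block d k B (n + 1) ∧ g ⟨[], Nat.succ_pos n⟩ ∈ S} =
      ∑ a ∈ S, Nat.card (BlockRoot d k B a (n + 1)) := by
  classical
  have e1 := (Equiv.sigmaFiberEquiv
    (fun g : {g : {w : List (Fin d) // w.length < n + 1} → Fin k //
        g ∈ Block d k B (n + 1) ∧ g ⟨[], Nat.succ_pos n⟩ ∈ S} =>
      (⟨g.1 ⟨[], Nat.succ_pos n⟩, g.2.2⟩ : {a : Fin k // a ∈ S}))).symm
  rw [Nat.card_congr e1, nat_card_sigma, ← Finset.sum_coe_sort S]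
  congr 1
  funext a
  refine Nat.card_congr ?_
  exact {
    toFun := fun gg => ⟨gg.1.1, gg.1.2.1, fun _ => congrArg Subtype.val gg.2⟩
    invFun := fun g => ⟨⟨g.1, g.2.1, by rw [g.2.2 (Nat.succ_pos n)]; exact a.2⟩,
      Subtype.ext (g.2.2 (Nat.succ_pos n))⟩
    left_inv := fun gg => by
      apply Subtype.ext; apply Subtype.ext; rfl
    right_inv := fun g => by
      apply Subtype.ext; rfl }

lemma card_blockRoot_succ (i : Fin k) (n : ℕ) :
    Nat.card (BlockRoot d k (BSet allow) i (n + 2)) =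
      ∏ pos : Fin d, ∑ a ∈ allow i pos, Nat.card (BlockRoot d k (BSet allow) a (n + 1)) := by
  rw [Nat.card_congr (blockEquiv allow i n), Nat.card_pi]
  congr 1
  funext pos
  exact card_filter_root (BSet allow) (allow i pos) n

lemma card_block_eq_sum (B : Finset (Fin k × (Fin d → Fin k))) (n : ℕ) :
    Nat.card (Block d k B (n + 1)) = ∑ a : Fin k, Nat.card (BlockRoot d k B a (n + 1)) := by
  classical
  have : Nat.card (Block d k B (n + 1)) = Nat.card {g : {w : List (Fin d) // w.length < n + 1} → Fin k //
      g ∈ Block d k B (n + 1) ∧ g ⟨[], Nat.succ_pos n⟩ ∈ (Finset.univ : Finset (Fin k))} := by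
    refine Nat.card_congr (Equiv.subtypeEquivRight ?_)
    simp
  rw [this, card_filter_root]

end counting2


section Realize

variable (l p : ℕ) (pexp kcoef : Fin l → ℕ)

def LL : List ℕ := 0 :: (List.finRange l).flatMap (fun j => List.replicate (kcoef j) (p - pexp j))

lemma length_LL : (LL l p pexp kcoef).length = 1 + ∑ j, kcoef j := by
  simp [LL, Function.comp_def, Fin.sum_univ_def]
  exact Nat.add_comm _ _

lemma pos_LL : 0 < (LL l p pexp kcoef).length := by simp [LL]

lemma prod_LL {M : Type*} [CommMonoid M] (F : ℕ → M) :
    (∏ pos : Fin (LL l p pexp kcoef).length, F ((LL l p pexp kcoef).get pos)) =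
      F 0 * ∏ j, F (p - pexp j) ^ kcoef j := by
  rw [← List.prod_ofFn]
  simp only [List.get_eq_getElem]
  rw [List.ofFn_getElem_eq_map, LL, List.map_cons, List.prod_cons, List.flatMap,
    List.map_flatten, List.prod_flatten, List.map_map, List.map_map]
  congr 1
  rw [Fin.prod_univ_def]
  apply congrArg
  apply List.map_congr_left
  intro j _
  simp [Function.comp_def, List.prod_replicate]

lemma mem_LL (x : ℕ) (hx : x ∈ LL l p pexp kcoef) : x = 0 ∨ ∃ j, x = p - pexp j := by
  simp only [LL, List.mem_cons, List.mem_flatMap, List.mem_replicate] at hx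
  rcases hx with h | ⟨j, _, _, rfl⟩
  · exact Or.inl h
  · exact Or.inr ⟨j, rfl⟩

def dead : Fin (p + 3) := ⟨0, by omega⟩
def es1 : Fin (p + 3) := ⟨1, by omega⟩
def es2 : Fin (p + 3) := ⟨2, by omega⟩

def chainSym (t : ℕ) : Fin (p + 3) := if h : t + 2 < p + 3 then ⟨t + 2, h⟩ else dead p

def childAllow (t : ℕ) : Finset (Fin (p + 3)) :=
  if t = 0 then {dead p}
  else if t = 1 then {es1 p, es2 p}
  else {chainSym p (t - 1)}

def allowF : Fin (p + 3) → Fin (LL l p pexp kcoef).length → Finset (Fin (p + 3)) :=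
  fun i pos =>
    if (i : ℕ) = 1 ∨ (i : ℕ) = 2 then childAllow p ((LL l p pexp kcoef).get pos)
    else if 3 ≤ (i : ℕ) ∧ (pos : ℕ) = 0 then childAllow p ((i : ℕ) - 2)
    else {dead p}

end Realize
section Realize2

variable (l p : ℕ) (pexp kcoef : Fin l → ℕ)

noncomputable def bfun (i : Fin (p + 3)) (n : ℕ) : ℕ :=
  Nat.card (BlockRoot (LL l p pexp kcoef).length (p + 3) (BSet (allowF l p pexp kcoef)) i n)

lemma bfun_one (i : Fin (p + 3)) : bfun l p pexp kcoef i 1 = 1 :=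
  card_blockRoot_one _ i

lemma bfun_succ (i : Fin (p + 3)) (n : ℕ) (hn : 1 ≤ n) :
    bfun l p pexp kcoef i (n + 1) =
      ∏ pos : Fin (LL l p pexp kcoef).length,
        ∑ a ∈ allowF l p pexp kcoef i pos, bfun l p pexp kcoef a n := by
  obtain ⟨m, rfl⟩ : ∃ m, n = m + 1 := ⟨n - 1, by omega⟩
  exact card_blockRoot_succ (allowF l p pexp kcoef) i m

lemma allow_dead (pos : Fin (LL l p pexp kcoef).length) :
    allowF l p pexp kcoef (dead p) pos = {dead p} := by
  simp [allowF, dead]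

lemma bfun_dead : ∀ n : ℕ, bfun l p pexp kcoef (dead p) (n + 1) = 1
  | 0 => bfun_one l p pexp kcoef _
  | n + 1 => by
    rw [bfun_succ l p pexp kcoef _ (n + 1) (by omega)]
    have : ∀ pos : Fin (LL l p pexp kcoef).length,
        (∑ a ∈ allowF l p pexp kcoef (dead p) pos, bfun l p pexp kcoef a (n + 1)) = 1 := by
      intro pos
      rw [allow_dead, Finset.sum_singleton, bfun_dead n]
    simp [this]

lemma bfun_s2 (n : ℕ) (hn : 1 ≤ n) :
    bfun l p pexp kcoef (es2 p) n = bfun l p pexp kcoef (es1 p) n := by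
  match n, hn with
  | 1, _ => rw [bfun_one, bfun_one]
  | (n + 2), _ =>
    rw [bfun_succ l p pexp kcoef _ (n + 1) (by omega),
      bfun_succ l p pexp kcoef _ (n + 1) (by omega)]
    apply Finset.prod_congr rfl
    intro pos _
    have : allowF l p pexp kcoef (es2 p) pos = allowF l p pexp kcoef (es1 p) pos := by
      simp [allowF, es1, es2]
    rw [this]

lemma val_chainSym (t : ℕ) (ht : t ≤ p) : ((chainSym p t : Fin (p + 3)) : ℕ) = t + 2 := by
  rw [chainSym, dif_pos (by omega)]

lemma es1_ne_es2 : es1 p ≠ es2 p := by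
  simp [es1, es2, Fin.ext_iff]

lemma bfun_chain : ∀ n t : ℕ, 1 ≤ t → t ≤ p → 1 ≤ n →
    bfun l p pexp kcoef (chainSym p t) n =
      if n ≤ t then 1 else 2 * bfun l p pexp kcoef (es1 p) (n - t) := by
  intro n
  induction n with
  | zero => omega
  | succ n IH =>
    intro t ht1 ht2 _
    rcases Nat.eq_zero_or_pos n with rfl | hn
    · rw [bfun_one, if_pos (by omega)]
    rw [bfun_succ l p pexp kcoef _ n hn]
    have key : (∏ pos : Fin (LL l p pexp kcoef).length,
        ∑ a ∈ allowF l p pexp kcoef (chainSym p t) pos, bfun l p pexp kcoef a n) =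
        ∑ a ∈ childAllow p t, bfun l p pexp kcoef a n := by
      rw [Finset.prod_eq_single (⟨0, pos_LL l p pexp kcoef⟩ : Fin (LL l p pexp kcoef).length)]
      · congr 1
        rw [allowF, if_neg (by rw [val_chainSym _ _ ht2]; omega),
          if_pos ⟨by rw [val_chainSym _ _ ht2]; omega, rfl⟩, val_chainSym _ _ ht2]
        norm_num
      · intro b _ hb
        have hb0 : (b : ℕ) ≠ 0 := fun h => hb (Fin.ext h)
        rw [allowF, if_neg (by rw [val_chainSym _ _ ht2]; omega), if_neg (by tauto),
          Finset.sum_singleton]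
        show bfun l p pexp kcoef (dead p) n = 1
        obtain ⟨m, rfl⟩ : ∃ m, n = m + 1 := ⟨n - 1, by omega⟩
        exact bfun_dead l p pexp kcoef m
      · intro h
        exact absurd (Finset.mem_univ _) h
    rw [key]
    rcases Nat.lt_or_ge 1 t with ht | ht
    · -- t ≥ 2
      rw [childAllow, if_neg (by omega), if_neg (by omega), Finset.sum_singleton,
        IH (t - 1) (by omega) (by omega) hn]
      rcases le_or_gt n (t - 1) with h | h
      · rw [if_pos h, if_pos (by omega)]
      · rw [if_neg (by omega), if_neg (by omega)]
        congr 2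
        omega
    · -- t = 1
      have : t = 1 := by omega
      subst this
      rw [childAllow, if_neg (by omega), if_pos rfl,
        Finset.sum_pair (es1_ne_es2 p), bfun_s2 l p pexp kcoef n hn, if_neg (by omega)]
      have : n + 1 - 1 = n := by omega
      rw [this, two_mul]

end Realize2
section Realize3

variable (l p : ℕ) (pexp kcoef : Fin l → ℕ)

lemma sum_childAllow (n t : ℕ) (hn : 1 ≤ n) (ht2 : t ≤ p) :
    ∑ a ∈ childAllow p t, bfun l p pexp kcoef a n =
      if t = 0 then 1 else if n + 1 ≤ t then 1
        else 2 * bfun l p pexp kcoef (es1 p) (n + 1 - t) := by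
  rcases Nat.eq_zero_or_pos t with rfl | ht1
  · rw [childAllow, if_pos rfl, Finset.sum_singleton, if_pos rfl]
    obtain ⟨m, rfl⟩ : ∃ m, n = m + 1 := ⟨n - 1, by omega⟩
    exact bfun_dead l p pexp kcoef m
  rcases le_or_gt t 1 with ht | ht
  · have : t = 1 := by omega
    subst this
    rw [childAllow, if_neg (by omega), if_pos rfl, Finset.sum_pair (es1_ne_es2 p),
      bfun_s2 l p pexp kcoef n hn, if_neg (by omega), if_neg (by omega), two_mul]
    have : n + 1 - 1 = n := by omega
    rw [this]
  · rw [childAllow, if_neg (show ¬t = 0 by omega), if_neg (show ¬t = 1 by omega),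
      Finset.sum_singleton,
      bfun_chain l p pexp kcoef n (t - 1) (by omega) (by omega) hn,
      if_neg (show ¬t = 0 by omega)]
    rcases le_or_gt n (t - 1) with h | h
    · rw [if_pos h, if_pos (by omega)]
    · rw [if_neg (show ¬n ≤ t - 1 by omega), if_neg (show ¬n + 1 ≤ t by omega)]
      congr 2
      omega

lemma bfun_s1_succ (hplt : ∀ j, pexp j < p) (n : ℕ) (hn : 1 ≤ n) :
    bfun l p pexp kcoef (es1 p) (n + 1) =
      ∏ j, (if n + 1 ≤ p - pexp j then 1
        else 2 * bfun l p pexp kcoef (es1 p) (n + 1 - (p - pexp j))) ^ kcoef j := by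
  rw [bfun_succ l p pexp kcoef _ n hn]
  have h1 : ∀ pos : Fin (LL l p pexp kcoef).length,
      (∑ a ∈ allowF l p pexp kcoef (es1 p) pos, bfun l p pexp kcoef a n) =
        ∑ a ∈ childAllow p ((LL l p pexp kcoef).get pos), bfun l p pexp kcoef a n := by
    intro pos
    have : allowF l p pexp kcoef (es1 p) pos =
        childAllow p ((LL l p pexp kcoef).get pos) := by
      simp [allowF, es1]
    rw [this]
  have h2 := prod_LL l p pexp kcoef
    (fun t => ∑ a ∈ childAllow p t, bfun l p pexp kcoef a n)
  rw [Finset.prod_congr rfl (fun pos _ => h1 pos), h2]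
  rw [sum_childAllow l p pexp kcoef n 0 hn (by omega), if_pos rfl, one_mul]
  apply Finset.prod_congr rfl
  intro j _
  congr 1
  rw [sum_childAllow l p pexp kcoef n (p - pexp j) hn (by omega),
    if_neg (by have := hplt j; omega)]

lemma bfun_s1_pos (hplt : ∀ j, pexp j < p) :
    ∀ n : ℕ, 1 ≤ n → 1 ≤ bfun l p pexp kcoef (es1 p) n := by
  intro n
  induction n using Nat.strong_induction_on with
  | _ n IH =>
    intro hn
    rcases Nat.lt_or_ge n 2 with h2 | h2
    · have : n = 1 := by omega
      subst this
      rw [bfun_one]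
    · obtain ⟨n, rfl⟩ : ∃ m, n = m + 2 := ⟨n - 2, by omega⟩
      rw [bfun_s1_succ l p pexp kcoef hplt (n + 1) (by omega)]
      apply Finset.one_le_prod'
      intro j _
      apply Nat.one_le_pow
      rcases le_or_gt (n + 2) (p - pexp j) with h | h
      · rw [if_pos h]; omega
      · rw [if_neg (by omega)]
        have := IH (n + 1 + 1 - (p - pexp j)) (by have := hplt j; omega) (by have := hplt j; omega)
        omega

end Realize3
section Realize4

variable (l p : ℕ) (pexp kcoef : Fin l → ℕ)

lemma bfun_le (hplt : ∀ j, pexp j < p) (i : Fin (p + 3)) (n : ℕ) (hn : 1 ≤ n) :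
    ∃ m, 1 ≤ m ∧ m ≤ n ∧
      bfun l p pexp kcoef i n ≤ 2 * bfun l p pexp kcoef (es1 p) m := by
  have hApos := bfun_s1_pos l p pexp kcoef hplt
  rcases Nat.lt_or_ge (i : ℕ) 3 with h3 | h3
  · refine ⟨n, hn, le_refl n, ?_⟩
    interval_cases hi : (i : ℕ)
    · have : i = dead p := Fin.ext (by rw [hi]; rfl)
      subst this
      obtain ⟨m, rfl⟩ : ∃ m, n = m + 1 := ⟨n - 1, by omega⟩
      rw [bfun_dead]
      have := hApos (m + 1) (by omega)
      omega
    · have : i = es1 p := Fin.ext (by rw [hi]; rfl)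
      subst this
      omega
    · have : i = es2 p := Fin.ext (by rw [hi]; rfl)
      subst this
      rw [bfun_s2 l p pexp kcoef n hn]
      omega
  · have hip : (i : ℕ) ≤ p + 2 := by omega
    have : i = chainSym p ((i : ℕ) - 2) := by
      apply Fin.ext
      rw [val_chainSym _ _ (by omega)]
      omega
    rw [this, bfun_chain l p pexp kcoef n ((i : ℕ) - 2) (by omega) (by omega) hn]
    rcases le_or_gt n ((i : ℕ) - 2) with h | h
    · refine ⟨n, hn, le_refl n, ?_⟩
      rw [if_pos h]
      have := hApos n hn
      omega
    · refine ⟨n - ((i : ℕ) - 2), by omega, by omega, ?_⟩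
      rw [if_neg (by omega)]

lemma card_total (n : ℕ) (hn : 1 ≤ n) :
    Nat.card (Block (LL l p pexp kcoef).length (p + 3) (BSet (allowF l p pexp kcoef)) n) =
      ∑ i : Fin (p + 3), bfun l p pexp kcoef i n := by
  obtain ⟨m, rfl⟩ : ∃ m, n = m + 1 := ⟨n - 1, by omega⟩
  exact card_block_eq_sum _ m

lemma total_ge (n : ℕ) (hn : 1 ≤ n) :
    bfun l p pexp kcoef (es1 p) n ≤
      Nat.card (Block (LL l p pexp kcoef).length (p + 3) (BSet (allowF l p pexp kcoef)) n) := by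
  rw [card_total l p pexp kcoef n hn]
  exact Finset.single_le_sum (f := fun i => bfun l p pexp kcoef i n)
    (fun i _ => Nat.zero_le _) (Finset.mem_univ (es1 p))

lemma total_le (hplt : ∀ j, pexp j < p) (n : ℕ) (hn : 1 ≤ n) (R : ℝ)
    (hR : ∀ m, 1 ≤ m → m ≤ n → Real.log (bfun l p pexp kcoef (es1 p) m) ≤ R) :
    (Nat.card (Block (LL l p pexp kcoef).length (p + 3)
        (BSet (allowF l p pexp kcoef)) n) : ℝ) ≤ (p + 3) * (2 * Real.exp R) := by
  rw [card_total l p pexp kcoef n hn]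
  push_cast
  have : ∀ i : Fin (p + 3), (bfun l p pexp kcoef i n : ℝ) ≤ 2 * Real.exp R := by
    intro i
    obtain ⟨m, hm1, hmn, hle⟩ := bfun_le l p pexp kcoef hplt i n hn
    have hA1 : 1 ≤ bfun l p pexp kcoef (es1 p) m := bfun_s1_pos l p pexp kcoef hplt m hm1
    have h2 : (bfun l p pexp kcoef (es1 p) m : ℝ) ≤ Real.exp R := by
      have := hR m hm1 hmn
      calc (bfun l p pexp kcoef (es1 p) m : ℝ)
          = Real.exp (Real.log (bfun l p pexp kcoef (es1 p) m)) := by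
            rw [Real.exp_log (by exact_mod_cast hA1 : (0:ℝ) < _)]
        _ ≤ Real.exp R := Real.exp_le_exp.2 this
    calc (bfun l p pexp kcoef i n : ℝ) ≤ (2 * bfun l p pexp kcoef (es1 p) m : ℕ) := by
          exact_mod_cast hle
      _ = 2 * (bfun l p pexp kcoef (es1 p) m : ℝ) := by push_cast; ring
      _ ≤ 2 * Real.exp R := by linarith
  calc (∑ i : Fin (p + 3), (bfun l p pexp kcoef i n : ℝ))
      ≤ ∑ _i : Fin (p + 3), 2 * Real.exp R := Finset.sum_le_sum fun i _ => this i
    _ = (p + 3) * (2 * Real.exp R) := by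
        rw [Finset.sum_const, Finset.card_univ, Fintype.card_fin, nsmul_eq_mul]
        push_cast
        ring

lemma log_bfun_succ (hplt : ∀ j, pexp j < p) (n : ℕ) (hn : 1 ≤ n) :
    Real.log (bfun l p pexp kcoef (es1 p) (n + 1)) =
      ∑ j, (kcoef j : ℝ) * (if n + 1 ≤ p - pexp j then 0
        else Real.log 2 + Real.log (bfun l p pexp kcoef (es1 p) (n + 1 - (p - pexp j)))) := by
  have hApos := bfun_s1_pos l p pexp kcoef hplt
  rw [bfun_s1_succ l p pexp kcoef hplt n hn]
  have hne : ∀ j : Fin l, ((if n + 1 ≤ p - pexp j then 1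
      else 2 * bfun l p pexp kcoef (es1 p) (n + 1 - (p - pexp j)) : ℕ) : ℝ) ^ kcoef j ≠ 0 := by
    intro j
    apply pow_ne_zero
    split_ifs with h
    · norm_num
    · have := hApos (n + 1 - (p - pexp j)) (by omega)
      positivity
  push_cast
  rw [Real.log_prod (fun j _ => by push_cast at hne ⊢; exact hne j)]
  apply Finset.sum_congr rfl
  intro j _
  rw [Real.log_pow]
  congr 1
  split_ifs with h
  · simp
  · rw [Real.log_mul (by norm_num)]
    have := hApos (n + 1 - (p - pexp j)) (by omega)
    have h0 : bfun l p pexp kcoef (es1 p) (n + 1 - (p - pexp j)) ≠ 0 := by omega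
    exact_mod_cast h0

end Realize4
set_option maxHeartbeats 1000000 in
/-- Realization theorem: if `ρ` is the largest real root of
`x^p - k_1 x^{p_1} - ⋯ - k_l x^{p_l}` with `p > p_1 > ⋯ > p_l ≥ 0` and `k_j ≥ 1`,
then there are `d, k ≥ 2` and a basic set `B` over `k` symbols on `d`-ary trees whose
tree-shift has entropy `ln ρ`. -/
theorem realization_theorem (l : ℕ) (hl : 1 ≤ l) (p : ℕ) (pexp : Fin l → ℕ)
    (kcoef : Fin l → ℕ) (hkpos : ∀ j, 1 ≤ kcoef j)
    (hanti : StrictAnti pexp) (hplt : ∀ j, pexp j < p) (ρ : ℝ)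
    (hroot : ρ ^ p - ∑ j, (kcoef j : ℝ) * ρ ^ pexp j = 0)
    (hmax : ∀ x : ℝ, x ^ p - ∑ j, (kcoef j : ℝ) * x ^ pexp j = 0 → x ≤ ρ) :
    ∃ d k : ℕ, 2 ≤ d ∧ 2 ≤ k ∧
      ∃ B : Finset (Fin k × (Fin d → Fin k)),
        Tendsto (fun n : ℕ => Real.log (Real.log (Nat.card (Block d k B n))) / n)
          atTop (nhds (Real.log ρ)) := by
  classical
  have j0 : Fin l := ⟨0, hl⟩
  have hp1 : 1 ≤ p := by have := hplt j0; omega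
  have hKsum : 1 ≤ ∑ j, kcoef j :=
    le_trans (hkpos j0) (Finset.single_le_sum (fun j _ => Nat.zero_le _) (Finset.mem_univ j0))
  have hd2 : 2 ≤ (LL l p pexp kcoef).length := by rw [length_LL]; omega
  refine ⟨(LL l p pexp kcoef).length, p + 3, hd2, by omega, BSet (allowF l p pexp kcoef), ?_⟩
  set d := (LL l p pexp kcoef).length with hd
  set B := BSet (allowF l p pexp kcoef) with hB
  set A : ℕ → ℕ := bfun l p pexp kcoef (es1 p) with hA
  set a : ℕ → ℝ := fun n => Real.log (A n) with ha
  have hApos : ∀ n, 1 ≤ n → 1 ≤ A n := bfun_s1_pos l p pexp kcoef hplt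
  have ha_nonneg : ∀ n, 1 ≤ n → 0 ≤ a n := fun n hn =>
    Real.log_nonneg (by exact_mod_cast hApos n hn)
  set K : ℝ := ∑ j, (kcoef j : ℝ) with hKdef
  have hK1 : 1 ≤ K := by
    rw [hKdef]
    exact_mod_cast hKsum
  -- ρ ≥ 1
  have hρ1 : 1 ≤ ρ := by
    set f : ℝ → ℝ := fun x => x ^ p - ∑ j, (kcoef j : ℝ) * x ^ pexp j with hf
    have hcont : Continuous f := by
      apply Continuous.sub (continuous_pow p)
      exact continuous_finset_sum _ (fun j _ => continuous_const.mul (continuous_pow (pexp j)))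
    have hf1 : f 1 ≤ 0 := by
      simp only [hf, one_pow, mul_one]
      have : ∑ j, (kcoef j : ℝ) = K := rfl
      linarith
    have hfK : 0 ≤ f (K + 1) := by
      have hK0 : (0:ℝ) ≤ K := by linarith
      have hsum_le : (∑ j, (kcoef j : ℝ) * (K + 1) ^ pexp j) ≤ K * (K + 1) ^ (p - 1) := by
        calc (∑ j, (kcoef j : ℝ) * (K + 1) ^ pexp j)
            ≤ ∑ j, (kcoef j : ℝ) * (K + 1) ^ (p - 1) := by
              apply Finset.sum_le_sum
              intro j _
              apply mul_le_mul_of_nonneg_left _ (by positivity)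
              apply pow_le_pow_right₀ (by linarith)
              have := hplt j; omega
          _ = K * (K + 1) ^ (p - 1) := by rw [← Finset.sum_mul]
      have hpow : (K + 1) ^ p = (K + 1) * (K + 1) ^ (p - 1) := by
        rw [← pow_succ']
        congr 1
        omega
      have hpownn : (0:ℝ) ≤ (K + 1) ^ (p - 1) := by positivity
      simp only [hf]
      nlinarith
    obtain ⟨x, hx, hfx⟩ : ∃ x ∈ Set.Icc (1:ℝ) (K + 1), f x = 0 := by
      have h1K : (1:ℝ) ≤ K + 1 := by linarith
      have hiv := intermediate_value_Icc h1K hcont.continuousOn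
      obtain ⟨x, hx, hfx⟩ := hiv ⟨hf1, hfK⟩
      exact ⟨x, hx, hfx⟩
    exact le_trans hx.1 (hmax x hfx)
  have hρ0 : (0:ℝ) < ρ := by linarith
  have hρeq : ρ ^ p = ∑ j, (kcoef j : ℝ) * ρ ^ pexp j := by linarith [hroot]
  have hsumρ : ∀ n, p ≤ n → (∑ j, (kcoef j : ℝ) * ρ ^ (n - (p - pexp j))) = ρ ^ n := by
    intro n hn
    have hterm : ∀ j : Fin l, ρ ^ (n - (p - pexp j)) = ρ ^ (n - p) * ρ ^ pexp j := by
      intro j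
      rw [← pow_add]
      congr 1
      have := hplt j; omega
    calc (∑ j, (kcoef j : ℝ) * ρ ^ (n - (p - pexp j)))
        = ∑ j, ρ ^ (n - p) * ((kcoef j : ℝ) * ρ ^ pexp j) := by
          apply Finset.sum_congr rfl
          intro j _
          rw [hterm j]; ring
      _ = ρ ^ (n - p) * ∑ j, (kcoef j : ℝ) * ρ ^ pexp j := by rw [← Finset.mul_sum]
      _ = ρ ^ (n - p) * ρ ^ p := by rw [hρeq]
      _ = ρ ^ n := by rw [← pow_add]; congr 1; omega
  have hrecfull : ∀ n, 1 ≤ n → a (n + 1) =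
      ∑ j, (kcoef j : ℝ) * (if n + 1 ≤ p - pexp j then 0
        else Real.log 2 + a (n + 1 - (p - pexp j))) :=
    fun n hn => log_bfun_succ l p pexp kcoef hplt n hn
  have hrec : ∀ n, p ≤ n → a (n + 1) =
      ∑ j, (kcoef j : ℝ) * (Real.log 2 + a (n + 1 - (p - pexp j))) := by
    intro n hn
    rw [hrecfull n (by omega)]
    apply Finset.sum_congr rfl
    intro j _
    rw [if_neg (by have := hplt j; omega)]
  have hl2 : (0:ℝ) < Real.log 2 := Real.log_pos (by norm_num)
  have hlow : ∀ n, p + 1 ≤ n → K * Real.log 2 ≤ a n := by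
    intro n hn
    obtain ⟨m, rfl⟩ : ∃ m, n = m + 1 := ⟨n - 1, by omega⟩
    rw [hrec m (by omega)]
    have hterm : ∀ j : Fin l, (kcoef j : ℝ) * Real.log 2 ≤
        (kcoef j : ℝ) * (Real.log 2 + a (m + 1 - (p - pexp j))) := by
      intro j
      apply mul_le_mul_of_nonneg_left _ (by positivity)
      have := ha_nonneg (m + 1 - (p - pexp j)) (by have := hplt j; omega)
      linarith
    calc K * Real.log 2 = ∑ j, (kcoef j : ℝ) * Real.log 2 := by rw [hKdef, Finset.sum_mul]
      _ ≤ _ := Finset.sum_le_sum (fun j _ => hterm j)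
  -- the total count and its bounds
  have hTlb0 : ∀ n, 1 ≤ n → a n ≤ Real.log (Nat.card (Block d (p + 3) B n)) := by
    intro n hn
    apply Real.log_le_log (by exact_mod_cast hApos n hn)
    exact_mod_cast total_ge l p pexp kcoef n hn
  have hTub0 : ∀ n, 1 ≤ n → ∀ R : ℝ, (∀ m, 1 ≤ m → m ≤ n → a m ≤ R) →
      Real.log (Nat.card (Block d (p + 3) B n)) ≤ Real.log (2 * (p + 3)) + R := by
    intro n hn R hR
    have hcard1 : (1:ℝ) ≤ (Nat.card (Block d (p + 3) B n) : ℝ) := by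
      have h1 := total_ge l p pexp kcoef n hn
      have h2 := hApos n hn
      exact_mod_cast le_trans h2 h1
    have := total_le l p pexp kcoef hplt n hn R hR
    calc Real.log (Nat.card (Block d (p + 3) B n))
        ≤ Real.log ((p + 3) * (2 * Real.exp R)) := Real.log_le_log (by linarith) this
      _ = Real.log (2 * (p + 3)) + R := by
          rw [show ((p:ℝ) + 3) * (2 * Real.exp R) = 2 * (p + 3) * Real.exp R by ring,
            Real.log_mul (by positivity) (Real.exp_ne_zero R), Real.log_exp]
  rcases eq_or_lt_of_le hKsum with hK1nat | hK2nat
  · -- K = 1, ρ = 1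
    have hKr : K = 1 := by
      rw [hKdef]
      exact_mod_cast hK1nat.symm
    have hρeq1 : ρ = 1 := by
      by_contra hne
      have hρgt : 1 < ρ := lt_of_le_of_ne hρ1 (Ne.symm hne)
      have hlt : (∑ j, (kcoef j : ℝ) * ρ ^ pexp j) < ∑ j, (kcoef j : ℝ) * ρ ^ p := by
        apply Finset.sum_lt_sum_of_nonempty ⟨j0, Finset.mem_univ j0⟩
        intro j _
        apply mul_lt_mul_of_pos_left _ (by exact_mod_cast hkpos j : (0:ℝ) < (kcoef j : ℝ))
        exact pow_lt_pow_right₀ hρgt (hplt j)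
      rw [← Finset.sum_mul] at hlt
      rw [← hKdef] at hlt
      rw [hKr, one_mul] at hlt
      linarith [hρeq]
    have hlogρ : Real.log ρ = 0 := by rw [hρeq1, Real.log_one]
    rw [hlogρ]
    have ha1 : a 1 = 0 := by
      rw [ha]
      simp only [hA, bfun_one]
      norm_num
    have haub : ∀ n, 1 ≤ n → a n ≤ n * Real.log 2 := by
      intro n
      induction n using Nat.strong_induction_on with
      | _ n IH =>
        intro hn
        rcases Nat.lt_or_ge n 2 with h2 | h2
        · have : n = 1 := by omega
          subst this
          rw [ha1]
          push_cast
          linarith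
        · obtain ⟨m, rfl⟩ : ∃ m, n = m + 2 := ⟨n - 2, by omega⟩
          rw [show m + 2 = (m + 1) + 1 by ring, hrecfull (m + 1) (by omega)]
          have hterm : ∀ j : Fin l, (kcoef j : ℝ) * (if m + 1 + 1 ≤ p - pexp j then 0
              else Real.log 2 + a (m + 1 + 1 - (p - pexp j)))
              ≤ (kcoef j : ℝ) * ((m + 1 + 1 : ℕ) * Real.log 2) := by
            intro j
            apply mul_le_mul_of_nonneg_left _ (by positivity)
            split_ifs with h
            · positivity
            · have hq := hplt j
              have hIH := IH (m + 1 + 1 - (p - pexp j)) (by omega) (by omega)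
              have he : ((m + 1 + 1 - (p - pexp j) : ℕ) : ℝ) ≤ ((m + 1 : ℕ) : ℝ) := by
                exact_mod_cast (show m + 1 + 1 - (p - pexp j) ≤ m + 1 by omega)
              have h2 : ((m + 1 + 1 - (p - pexp j) : ℕ) : ℝ) * Real.log 2 ≤
                  ((m + 1 : ℕ) : ℝ) * Real.log 2 :=
                mul_le_mul_of_nonneg_right he (le_of_lt hl2)
              have h3 : ((m + 1 + 1 : ℕ) : ℝ) * Real.log 2 =
                  ((m + 1 : ℕ) : ℝ) * Real.log 2 + Real.log 2 := by push_cast; ring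
              rw [h3]
              linarith
          calc (∑ j, (kcoef j : ℝ) * (if m + 1 + 1 ≤ p - pexp j then 0
                else Real.log 2 + a (m + 1 + 1 - (p - pexp j))))
              ≤ ∑ j, (kcoef j : ℝ) * ((m + 1 + 1 : ℕ) * Real.log 2) :=
                Finset.sum_le_sum (fun j _ => hterm j)
            _ = K * ((m + 1 + 1 : ℕ) * Real.log 2) := by rw [hKdef, Finset.sum_mul]
            _ = ((m + 2 : ℕ) : ℝ) * Real.log 2 := by rw [hKr]; push_cast; ring
    have hlog23 : (0:ℝ) < Real.log (2 * (p + 3)) := Real.log_pos (by push_cast; linarith)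
    set C5 : ℝ := Real.log (2 * (p + 3)) + Real.log 2 with hC5
    have hC5pos : 0 < C5 := by linarith
    have hTub : ∀ n, 1 ≤ n → Real.log (Nat.card (Block d (p + 3) B n)) ≤ C5 * n := by
      intro n hn
      have h1 := hTub0 n hn ((n : ℝ) * Real.log 2) (fun m hm hmn => by
        calc a m ≤ (m : ℝ) * Real.log 2 := haub m hm
          _ ≤ (n : ℝ) * Real.log 2 := by
            apply mul_le_mul_of_nonneg_right _ (le_of_lt hl2)
            exact_mod_cast hmn)
      have hn1 : (1:ℝ) ≤ (n : ℝ) := by exact_mod_cast hn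
      calc Real.log (Nat.card (Block d (p + 3) B n))
          ≤ Real.log (2 * (p + 3)) + (n : ℝ) * Real.log 2 := h1
        _ ≤ C5 * n := by
            rw [hC5]
            have : Real.log (2 * (p + 3)) * 1 ≤ Real.log (2 * (p + 3)) * n :=
              mul_le_mul_of_nonneg_left hn1 (le_of_lt hlog23)
            nlinarith
    have hTlb : ∀ n, p + 1 ≤ n → Real.log 2 ≤ Real.log (Nat.card (Block d (p + 3) B n)) := by
      intro n hn
      have h1 := hTlb0 n (by omega)
      have h2 := hlow n hn
      rw [hKr, one_mul] at h2
      linarith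
    -- squeeze
    have hlogn : Tendsto (fun n : ℕ => Real.log n / n) atTop (nhds 0) := by
      have h := Real.isLittleO_log_id_atTop.tendsto_div_nhds_zero
      exact h.comp tendsto_natCast_atTop_atTop
    have hupper : Tendsto (fun n : ℕ => Real.log C5 / n + Real.log n / n) atTop (nhds 0) := by
      have h1 := tendsto_const_div_atTop_nhds_zero_nat (Real.log C5)
      have := h1.add hlogn
      simpa using this
    have hlower : Tendsto (fun n : ℕ => Real.log (Real.log 2) / n) atTop (nhds 0) :=
      tendsto_const_div_atTop_nhds_zero_nat _
    apply tendsto_of_tendsto_of_tendsto_of_le_of_le' hlower hupper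
    · filter_upwards [eventually_ge_atTop (p + 1)] with n hn
      have hT2 := hTlb n hn
      have hnn : (0:ℝ) < (n:ℝ) := by exact_mod_cast (show 0 < n by omega)
      exact (div_le_div_iff_of_pos_right hnn).2 (Real.log_le_log hl2 hT2)
    · filter_upwards [eventually_ge_atTop (p + 1)] with n hn
      have hT2 := hTlb n hn
      have hT1 := hTub n (by omega)
      have hpos : (0:ℝ) < Real.log (Nat.card (Block d (p + 3) B n)) := lt_of_lt_of_le hl2 hT2
      have : Real.log (Real.log (Nat.card (Block d (p + 3) B n))) ≤ Real.log (C5 * n) :=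
        Real.log_le_log hpos hT1
      have hsplit : Real.log (C5 * n) = Real.log C5 + Real.log n := by
        rw [Real.log_mul (ne_of_gt hC5pos) (Nat.cast_ne_zero.2 (by omega))]
      rw [hsplit] at this
      have hnn : (0:ℝ) < (n:ℝ) := by exact_mod_cast (show 0 < n by omega)
      calc Real.log (Real.log (Nat.card (Block d (p + 3) B n))) / n
          ≤ (Real.log C5 + Real.log n) / n := (div_le_div_iff_of_pos_right hnn).2 this
        _ = Real.log C5 / n + Real.log n / n := add_div _ _ _
  · -- K ≥ 2, ρ > 1
    have hK2 : (2:ℝ) ≤ K := by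
      rw [hKdef]
      exact_mod_cast hK2nat
    have hρgt : 1 < ρ := by
      rcases eq_or_lt_of_le hρ1 with h1 | h1
      · exfalso
        have : (1:ℝ) ^ p = ∑ j, (kcoef j : ℝ) * (1:ℝ) ^ pexp j := by rw [h1]; exact hρeq
        simp only [one_pow, mul_one] at this
        rw [← hKdef] at this
        linarith
      · exact h1
    set D : ℝ := K * Real.log 2 / (K - 1) with hD
    have hKm1 : (0:ℝ) < K - 1 := by linarith
    have hDpos : 0 < D := div_pos (by nlinarith) hKm1
    have hDk : K * Real.log 2 = D * (K - 1) := by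
      rw [hD]
      field_simp
    set S : ℝ := ∑ m ∈ Finset.Icc 1 p, a m with hS
    have hSnn : 0 ≤ S := Finset.sum_nonneg fun m hm => ha_nonneg m (Finset.mem_Icc.1 hm).1
    set C1 : ℝ := D + 1 + S with hC1
    have hC1pos : 0 < C1 := by linarith
    have hub : ∀ n, 1 ≤ n → a n ≤ C1 * ρ ^ n - D := by
      intro n
      induction n using Nat.strong_induction_on with
      | _ n IH =>
        intro hn
        rcases le_or_gt n p with hnp | hnp
        · have h1 : a n ≤ S :=
            Finset.single_le_sum (fun m hm => ha_nonneg m (Finset.mem_Icc.1 hm).1)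
              (Finset.mem_Icc.2 ⟨hn, hnp⟩)
          have h2 : (1:ℝ) ≤ ρ ^ n := by
            calc (1:ℝ) = 1 ^ n := (one_pow n).symm
              _ ≤ ρ ^ n := pow_le_pow_left₀ (by norm_num) hρ1 n
          nlinarith
        · obtain ⟨m, rfl⟩ : ∃ m, n = m + 1 := ⟨n - 1, by omega⟩
          rw [hrec m (by omega)]
          have hstep : ∀ j : Fin l, (kcoef j : ℝ) * (Real.log 2 + a (m + 1 - (p - pexp j)))
              ≤ (kcoef j : ℝ) * (Real.log 2 - D) +
                C1 * ((kcoef j : ℝ) * ρ ^ (m + 1 - (p - pexp j))) := by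
            intro j
            have hq := hplt j
            have hIH := IH (m + 1 - (p - pexp j)) (by omega) (by omega)
            have hc : (0:ℝ) ≤ (kcoef j : ℝ) := by positivity
            nlinarith
          calc (∑ j, (kcoef j : ℝ) * (Real.log 2 + a (m + 1 - (p - pexp j))))
              ≤ ∑ j, ((kcoef j : ℝ) * (Real.log 2 - D) +
                  C1 * ((kcoef j : ℝ) * ρ ^ (m + 1 - (p - pexp j)))) :=
                Finset.sum_le_sum (fun j _ => hstep j)
            _ = K * (Real.log 2 - D) +
                C1 * (∑ j, (kcoef j : ℝ) * ρ ^ (m + 1 - (p - pexp j))) := by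
                rw [Finset.sum_add_distrib, ← Finset.sum_mul, ← Finset.mul_sum, hKdef]
            _ = K * (Real.log 2 - D) + C1 * ρ ^ (m + 1) := by
                rw [hsumρ (m + 1) (by omega)]
            _ ≤ C1 * ρ ^ (m + 1) - D := by nlinarith
    set c2 : ℝ := K * Real.log 2 / ρ ^ (2 * p + 1) with hc2
    have hc2pos : 0 < c2 := div_pos (by nlinarith) (by positivity)
    have hlb : ∀ n, p + 1 ≤ n → c2 * ρ ^ n ≤ a n := by
      intro n
      induction n using Nat.strong_induction_on with
      | _ n IH =>
        intro hn
        rcases le_or_gt n (2 * p + 1) with hn2 | hn2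
        · have h1 : ρ ^ n ≤ ρ ^ (2 * p + 1) := pow_le_pow_right₀ hρ1 hn2
          have key : c2 * ρ ^ (2 * p + 1) = K * Real.log 2 := by
            rw [hc2]
            field_simp
          have h3 : c2 * ρ ^ n ≤ c2 * ρ ^ (2 * p + 1) :=
            mul_le_mul_of_nonneg_left h1 (le_of_lt hc2pos)
          have h4 := hlow n hn
          linarith
        · obtain ⟨m, rfl⟩ : ∃ m, n = m + 1 := ⟨n - 1, by omega⟩
          rw [hrec m (by omega)]
          have hstep : ∀ j : Fin l, c2 * ((kcoef j : ℝ) * ρ ^ (m + 1 - (p - pexp j)))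
              ≤ (kcoef j : ℝ) * (Real.log 2 + a (m + 1 - (p - pexp j))) := by
            intro j
            have hq := hplt j
            have hIH := IH (m + 1 - (p - pexp j)) (by omega) (by omega)
            have hc : (0:ℝ) ≤ (kcoef j : ℝ) := by positivity
            nlinarith
          calc c2 * ρ ^ (m + 1)
              = c2 * (∑ j, (kcoef j : ℝ) * ρ ^ (m + 1 - (p - pexp j))) := by
                rw [hsumρ (m + 1) (by omega)]
            _ = ∑ j, c2 * ((kcoef j : ℝ) * ρ ^ (m + 1 - (p - pexp j))) := Finset.mul_sum _ _ _
            _ ≤ _ := Finset.sum_le_sum (fun j _ => hstep j)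
    set C3 : ℝ := Real.log (2 * (p + 3)) + C1 with hC3
    have hlog23 : (0:ℝ) < Real.log (2 * (p + 3)) := Real.log_pos (by push_cast; linarith)
    have hC3pos : 0 < C3 := by linarith
    have hTub : ∀ n, 1 ≤ n → Real.log (Nat.card (Block d (p + 3) B n)) ≤ C3 * ρ ^ n := by
      intro n hn
      have h1 := hTub0 n hn (C1 * ρ ^ n) (fun m hm hmn => by
        have h2 := hub m hm
        have h3 : ρ ^ m ≤ ρ ^ n := pow_le_pow_right₀ hρ1 hmn
        nlinarith)
      have h2 : (1:ℝ) ≤ ρ ^ n := by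
        calc (1:ℝ) = 1 ^ n := (one_pow n).symm
          _ ≤ ρ ^ n := pow_le_pow_left₀ (by norm_num) hρ1 n
      rw [hC3]
      nlinarith
    have hTlb : ∀ n, p + 1 ≤ n → c2 * ρ ^ n ≤ Real.log (Nat.card (Block d (p + 3) B n)) := by
      intro n hn
      have h1 := hTlb0 n (by omega)
      have h2 := hlb n hn
      linarith
    have hupper : Tendsto (fun n : ℕ => Real.log C3 / n + Real.log ρ) atTop
        (nhds (Real.log ρ)) := by
      have h1 := (tendsto_const_div_atTop_nhds_zero_nat (Real.log C3)).add_const (Real.log ρ)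
      simpa using h1
    have hlower : Tendsto (fun n : ℕ => Real.log c2 / n + Real.log ρ) atTop
        (nhds (Real.log ρ)) := by
      have h1 := (tendsto_const_div_atTop_nhds_zero_nat (Real.log c2)).add_const (Real.log ρ)
      simpa using h1
    apply tendsto_of_tendsto_of_tendsto_of_le_of_le' hlower hupper
    · filter_upwards [eventually_ge_atTop (p + 1)] with n hn
      have hnn : (0:ℝ) < (n:ℝ) := by exact_mod_cast (show 0 < n by omega)
      have hT2 := hTlb n hn
      have hple : (0:ℝ) < c2 * ρ ^ n := by positivity
      have hlog : Real.log c2 + (n : ℝ) * Real.log ρ ≤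
          Real.log (Real.log (Nat.card (Block d (p + 3) B n))) := by
        have h := Real.log_le_log hple hT2
        rw [Real.log_mul (ne_of_gt hc2pos) (by positivity), Real.log_pow] at h
        exact h
      have hsplit : (Real.log c2 + (n : ℝ) * Real.log ρ) / (n : ℝ) =
          Real.log c2 / n + Real.log ρ := by
        rw [add_div, mul_div_cancel_left₀ _ (ne_of_gt hnn)]
      rw [← hsplit]
      exact (div_le_div_iff_of_pos_right hnn).2 hlog
    · filter_upwards [eventually_ge_atTop (p + 1)] with n hn
      have hnn : (0:ℝ) < (n:ℝ) := by exact_mod_cast (show 0 < n by omega)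
      have hT2 := hTlb n hn
      have hT1 := hTub n (by omega)
      have hple : (0:ℝ) < c2 * ρ ^ n := by positivity
      have hpos : (0:ℝ) < Real.log (Nat.card (Block d (p + 3) B n)) := lt_of_lt_of_le hple hT2
      have hlog : Real.log (Real.log (Nat.card (Block d (p + 3) B n))) ≤
          Real.log C3 + (n : ℝ) * Real.log ρ := by
        have h := Real.log_le_log hpos hT1
        rw [Real.log_mul (ne_of_gt hC3pos) (by positivity), Real.log_pow] at h
        exact h
      have hsplit : (Real.log C3 + (n : ℝ) * Real.log ρ) / (n : ℝ) =
          Real.log C3 / n + Real.log ρ := by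
        rw [add_div, mul_div_cancel_left₀ _ (ne_of_gt hnn)]
      rw [← hsplit]
      exact (div_le_div_iff_of_pos_right hnn).2 hlog
end

section
/- For every integer m ≥ 2, let γ_m be the multinacci number of order m, i.e., the unique real number in the interval (1,2) satisfying γ_m^{−1} + γ_m^{−2} + ⋯ + γ_m^{−m} = 1. Then there exist integers d ≥ 2 and k ≥ 2 and a basic set B ⊆ A × A^d over an alphabet A of size k such that the entropy limit of X^B exists and equals ln γ_m, i.e., ln(ln |B_n(X^B)|)/n → ln γ_m as n → ∞. -/
open Filter Real

namespace MultinacciProof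

/-- transition on "ages": left child (j=0) ages by one (capped at `m+1` = dead),
right child (j=1) is reborn at age 1 unless parent is dead. -/
def stp (m a : ℕ) (j : Fin 2) : ℕ :=
  if j = (1 : Fin 2) then (if a ≤ m then 1 else m + 1) else min (a + 1) (m + 1)

def ag (m b : ℕ) (v : List (Fin 2)) : ℕ := v.foldl (stp m) b

@[simp] lemma ag_nil (m b : ℕ) : ag m b [] = b := rfl

lemma ag_cons (m b : ℕ) (j : Fin 2) (v : List (Fin 2)) :
    ag m b (j :: v) = ag m (stp m b j) v := rfl

lemma ag_concat (m b : ℕ) (v : List (Fin 2)) (j : Fin 2) :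
    ag m b (v ++ [j]) = stp m (ag m b v) j := by
  simp [ag, List.foldl_append]

lemma stp_pos (m a : ℕ) (j : Fin 2) : 1 ≤ stp m a j := by
  unfold stp; split_ifs <;> omega

lemma stp_le (m a : ℕ) (j : Fin 2) : stp m a j ≤ m + 1 := by
  unfold stp; split_ifs <;> omega

lemma stp_mono (m : ℕ) {a a' : ℕ} (h : a ≤ a') (j : Fin 2) : stp m a j ≤ stp m a' j := by
  unfold stp; split_ifs <;> omega

lemma ag_pos (m : ℕ) {b : ℕ} (hb : 1 ≤ b) (v : List (Fin 2)) : 1 ≤ ag m b v := by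
  induction v generalizing b with
  | nil => simpa
  | cons j t ih => rw [ag_cons]; exact ih (stp_pos m b j)

lemma ag_le (m : ℕ) {b : ℕ} (hb : b ≤ m + 1) (v : List (Fin 2)) : ag m b v ≤ m + 1 := by
  induction v generalizing b with
  | nil => simpa
  | cons j t ih => rw [ag_cons]; exact ih (stp_le m b j)

lemma ag_mono (m : ℕ) {b b' : ℕ} (h : b ≤ b') (v : List (Fin 2)) :
    ag m b v ≤ ag m b' v := by
  induction v generalizing b b' with
  | nil => simpa
  | cons j t ih => rw [ag_cons, ag_cons]; exact ih (stp_mono m h j)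

lemma stp_dead (m : ℕ) (j : Fin 2) : stp m (m + 1) j = m + 1 := by
  unfold stp; split_ifs <;> omega

lemma ag_dead (m : ℕ) (v : List (Fin 2)) : ag m (m + 1) v = m + 1 := by
  induction v with
  | nil => rfl
  | cons j t ih => rw [ag_cons, stp_dead]; exact ih

/-- all binary words of length `ℓ`. -/
def W : ℕ → Finset (List (Fin 2))
  | 0 => {[]}
  | (ℓ + 1) => ((W ℓ).image (List.cons 0)) ∪ ((W ℓ).image (List.cons 1))

lemma mem_W {ℓ : ℕ} {v : List (Fin 2)} : v ∈ W ℓ ↔ v.length = ℓ := by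
  induction ℓ generalizing v with
  | zero => simp [W, List.length_eq_zero_iff]
  | succ ℓ ih =>
    cases v with
    | nil => simp [W]
    | cons j t =>
      simp only [W, Finset.mem_union, Finset.mem_image, List.length_cons]
      constructor
      · rintro (⟨a, ha, h⟩ | ⟨a, ha, h⟩) <;>
          · injection h with h1 h2
            subst h1; subst h2
            simp [ih.mp ha]
      · intro ht
        have ht' : t ∈ W ℓ := ih.mpr (by omega)
        have : j = 0 ∨ j = 1 := by omega
        rcases this with rfl | rfl
        · exact Or.inl ⟨t, ht', rfl⟩
        · exact Or.inr ⟨t, ht', rfl⟩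

/-- number of words of length `ℓ` with age `1`, starting from root age `b`. -/
def cnt (m ℓ b : ℕ) : ℕ := ((W ℓ).filter (fun v => ag m b v = 1)).card

lemma cnt_zero (m b : ℕ) : cnt m 0 b = if b = 1 then 1 else 0 := by
  simp only [cnt, W]
  split_ifs with h
  · rw [Finset.filter_eq_self.mpr (by simp [h])]; simp
  · rw [Finset.filter_eq_empty_iff.mpr (by simp [h])]; simp

lemma cnt_succ (m ℓ b : ℕ) :
    cnt m (ℓ + 1) b = cnt m ℓ (stp m b 0) + cnt m ℓ (stp m b 1) := by
  unfold cnt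
  show ((((W ℓ).image (List.cons 0)) ∪ ((W ℓ).image (List.cons 1))).filter
      (fun v => ag m b v = 1)).card = _
  rw [Finset.filter_union]
  rw [Finset.card_union_of_disjoint]
  · congr 1
    · rw [Finset.filter_image]
      rw [Finset.card_image_of_injective _ (List.cons_injective)]
      congr 1
    · rw [Finset.filter_image]
      rw [Finset.card_image_of_injective _ (List.cons_injective)]
      congr 1
  · rw [Finset.disjoint_left]
    intro x hx hx'
    simp only [Finset.mem_filter, Finset.mem_image] at hx hx'
    obtain ⟨⟨a, _, rfl⟩, _⟩ := hx
    obtain ⟨⟨a', _, h⟩, _⟩ := hx'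
    exact absurd (List.cons.inj h).1 (by decide)

lemma cnt_dead (m ℓ : ℕ) (hm : 1 ≤ m) : cnt m ℓ (m + 1) = 0 := by
  unfold cnt
  rw [Finset.card_eq_zero, Finset.filter_eq_empty_iff]
  intro v _
  rw [ag_dead]
  omega

lemma cnt_mono (m : ℕ) (hm : 1 ≤ m) :
    ∀ ℓ {b : ℕ}, 1 ≤ b → cnt m ℓ (b + 1) ≤ cnt m ℓ b := by
  intro ℓ
  induction ℓ with
  | zero => intro b hb; rw [cnt_zero, cnt_zero]; split_ifs <;> omega
  | succ ℓ ih =>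
    intro b hb
    rw [cnt_succ, cnt_succ]
    have h0 : cnt m ℓ (stp m (b + 1) 0) ≤ cnt m ℓ (stp m b 0) := by
      have e1 : stp m b 0 = min (b + 1) (m + 1) := by unfold stp; simp
      have e2 : stp m (b + 1) 0 = min (b + 2) (m + 1) := by unfold stp; simp; omega
      rw [e1, e2]
      rcases le_or_gt (m + 1) (b + 1) with h | h
      · rw [min_eq_right h, min_eq_right (by omega)]
      · rcases le_or_gt (b + 2) (m + 1) with h' | h'
        · rw [min_eq_left h', min_eq_left (by omega)]
          exact ih (by omega)
        · rw [min_eq_right (by omega), min_eq_right (by omega)]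
    have h1 : cnt m ℓ (stp m (b + 1) 1) ≤ cnt m ℓ (stp m b 1) := by
      have e1 : stp m b 1 = if b ≤ m then 1 else m + 1 := by unfold stp; simp
      have e2 : stp m (b + 1) 1 = if b + 1 ≤ m then 1 else m + 1 := by unfold stp; simp
      rw [e1, e2]
      split_ifs with hb1 hb2 hb2
      · exact le_refl _
      · omega
      · rw [cnt_dead m ℓ hm]; omega
      · exact le_refl _
    omega

lemma cnt_le_head (m : ℕ) (hm : 1 ≤ m) (ℓ : ℕ) : ∀ i, cnt m ℓ (1 + i) ≤ cnt m ℓ 1 := by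
  intro i
  induction i with
  | zero => exact le_refl _
  | succ i ih =>
    calc cnt m ℓ (1 + (i + 1)) = cnt m ℓ ((1 + i) + 1) := by ring_nf
      _ ≤ cnt m ℓ (1 + i) := cnt_mono m hm ℓ (by omega)
      _ ≤ cnt m ℓ 1 := ih

section Real

variable {m : ℕ} {γ : ℝ}

lemma weighted (hm : 2 ≤ m) (hγ0 : 0 < γ)
    (hsum : ∑ i ∈ Finset.range m, γ⁻¹ ^ i = γ) :
    ∀ ℓ, ∑ i ∈ Finset.range m, γ⁻¹ ^ i * (cnt m ℓ (i + 1) : ℝ) = γ ^ ℓ := by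
  obtain ⟨M, rfl⟩ : ∃ M, m = M + 1 := ⟨m - 1, by omega⟩
  have hγne : γ ≠ 0 := ne_of_gt hγ0
  intro ℓ
  induction ℓ with
  | zero =>
    rw [Finset.sum_range_succ']
    have h0 : ∀ i ∈ Finset.range M, γ⁻¹ ^ (i + 1) * (cnt (M + 1) 0 (i + 1 + 1) : ℝ) = 0 := by
      intro i _
      rw [cnt_zero]
      simp
    rw [Finset.sum_congr rfl h0, cnt_zero]
    simp
  | succ ℓ ih =>
    have key : ∀ i ∈ Finset.range (M + 1),
        γ⁻¹ ^ i * (cnt (M + 1) (ℓ + 1) (i + 1) : ℝ)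
          = γ⁻¹ ^ i * (cnt (M + 1) ℓ (min (i + 2) (M + 1 + 1)) : ℝ)
            + γ⁻¹ ^ i * (cnt (M + 1) ℓ 1 : ℝ) := by
      intro i hi
      rw [Finset.mem_range] at hi
      rw [cnt_succ]
      have e0 : stp (M + 1) (i + 1) 0 = min (i + 2) (M + 1 + 1) := by unfold stp; simp
      have e1 : stp (M + 1) (i + 1) 1 = 1 := by unfold stp; simp [Nat.succ_le_of_lt hi]
      rw [e0, e1]
      push_cast
      ring
    rw [Finset.sum_congr rfl key, Finset.sum_add_distrib, ← Finset.sum_mul, hsum]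
    have split : ∑ i ∈ Finset.range (M + 1), γ⁻¹ ^ i * (cnt (M + 1) ℓ (min (i + 2) (M + 1 + 1)) : ℝ)
        = ∑ i ∈ Finset.range M, γ⁻¹ ^ i * (cnt (M + 1) ℓ (i + 2) : ℝ) := by
      rw [Finset.sum_range_succ]
      have last0 : min (M + 2) (M + 1 + 1) = M + 1 + 1 := by omega
      rw [last0, cnt_dead _ _ (by omega)]
      simp only [Nat.cast_zero, mul_zero, add_zero]
      apply Finset.sum_congr rfl
      intro i hi
      rw [Finset.mem_range] at hi
      rw [min_eq_left (by omega)]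
    rw [split]
    have assemble : ∑ i ∈ Finset.range M, γ⁻¹ ^ i * (cnt (M + 1) ℓ (i + 2) : ℝ)
          + (cnt (M + 1) ℓ 1 : ℝ) * γ
        = γ * ∑ i ∈ Finset.range (M + 1), γ⁻¹ ^ i * (cnt (M + 1) ℓ (i + 1) : ℝ) := by
      rw [Finset.sum_range_succ', mul_add, Finset.mul_sum]
      congr 1
      · apply Finset.sum_congr rfl
        intro i _
        rw [pow_succ]
        have : γ * (γ⁻¹ ^ i * γ⁻¹ * (cnt (M + 1) ℓ (i + 1 + 1) : ℝ))
            = (γ * γ⁻¹) * (γ⁻¹ ^ i * (cnt (M + 1) ℓ (i + 1 + 1) : ℝ)) := by ring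
        rw [this, mul_inv_cancel₀ hγne, one_mul]
      · rw [pow_zero, one_mul]
        ring
    calc ∑ i ∈ Finset.range M, γ⁻¹ ^ i * (cnt (M + 1) ℓ (i + 2) : ℝ) + γ * (cnt (M + 1) ℓ 1 : ℝ)
        = ∑ i ∈ Finset.range M, γ⁻¹ ^ i * (cnt (M + 1) ℓ (i + 2) : ℝ)
            + (cnt (M + 1) ℓ 1 : ℝ) * γ := by ring
      _ = γ * ∑ i ∈ Finset.range (M + 1), γ⁻¹ ^ i * (cnt (M + 1) ℓ (i + 1) : ℝ) := assemble
      _ = γ * γ ^ ℓ := by rw [ih]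
      _ = γ ^ (ℓ + 1) := by ring

lemma cnt_le_geo (hm : 2 ≤ m) (hγ1 : 1 < γ)
    (hsum : ∑ i ∈ Finset.range m, γ⁻¹ ^ i = γ) (ℓ : ℕ) :
    (cnt m ℓ 1 : ℝ) ≤ γ ^ ℓ := by
  have h := weighted hm (by linarith) hsum ℓ
  have : γ⁻¹ ^ 0 * (cnt m ℓ (0 + 1) : ℝ) ≤ ∑ i ∈ Finset.range m, γ⁻¹ ^ i * (cnt m ℓ (i + 1) : ℝ) := by
    apply Finset.single_le_sum (f := fun i => γ⁻¹ ^ i * (cnt m ℓ (i + 1) : ℝ))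
    · intro i _
      positivity
    · simp only [Finset.mem_range]; omega
  rw [h] at this
  simpa using this

lemma geo_le_cnt (hm : 2 ≤ m) (hγ1 : 1 < γ)
    (hsum : ∑ i ∈ Finset.range m, γ⁻¹ ^ i = γ) (ℓ : ℕ) :
    γ ^ ℓ ≤ (m : ℝ) * (cnt m ℓ 1 : ℝ) := by
  have h := weighted hm (by linarith) hsum ℓ
  rw [← h]
  have hle : ∀ i ∈ Finset.range m, γ⁻¹ ^ i * (cnt m ℓ (i + 1) : ℝ) ≤ (cnt m ℓ 1 : ℝ) := by
    intro i _
    have h1 : γ⁻¹ ^ i ≤ 1 := by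
      apply pow_le_one₀ (by positivity)
      rw [inv_le_one_iff₀]; right; linarith
    have h2 : (cnt m ℓ (i + 1) : ℝ) ≤ (cnt m ℓ 1 : ℝ) := by
      have := cnt_le_head m (by omega) ℓ i
      rw [Nat.add_comm 1 i] at this
      exact_mod_cast this
    calc γ⁻¹ ^ i * (cnt m ℓ (i + 1) : ℝ) ≤ 1 * (cnt m ℓ 1 : ℝ) := by
          apply mul_le_mul h1 h2 (by positivity) (by norm_num)
      _ = (cnt m ℓ 1 : ℝ) := one_mul _
  calc ∑ i ∈ Finset.range m, γ⁻¹ ^ i * (cnt m ℓ (i + 1) : ℝ)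
      ≤ ∑ _i ∈ Finset.range m, (cnt m ℓ 1 : ℝ) := Finset.sum_le_sum hle
    _ = (m : ℝ) * (cnt m ℓ 1 : ℝ) := by simp [mul_comm]

end Real

/-- total number of "free" (age-1) words of length `< n`. -/
def sN (m n : ℕ) : ℕ := ∑ ℓ ∈ Finset.range n, cnt m ℓ 1

lemma sN_pos (m : ℕ) {n : ℕ} (hn : 1 ≤ n) : 1 ≤ sN m n := by
  have : cnt m 0 1 = 1 := by rw [cnt_zero]; simp
  calc 1 = cnt m 0 1 := this.symm
    _ ≤ sN m n := by
        apply Finset.single_le_sum (f := fun ℓ => cnt m ℓ 1)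
        · intro i _; exact Nat.zero_le _
        · rw [Finset.mem_range]; omega

lemma sN_lower {m : ℕ} {γ : ℝ} (hm : 2 ≤ m) (hγ1 : 1 < γ)
    (hsum : ∑ i ∈ Finset.range m, γ⁻¹ ^ i = γ) {n : ℕ} (hn : 1 ≤ n) :
    γ ^ (n - 1) ≤ (m : ℝ) * (sN m n : ℝ) := by
  calc γ ^ (n - 1) ≤ (m : ℝ) * (cnt m (n - 1) 1 : ℝ) := geo_le_cnt hm hγ1 hsum (n - 1)
    _ ≤ (m : ℝ) * (sN m n : ℝ) := by
        apply mul_le_mul_of_nonneg_left _ (by positivity)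
        have : cnt m (n - 1) 1 ≤ sN m n := by
          apply Finset.single_le_sum (f := fun ℓ => cnt m ℓ 1)
          · intro i _; exact Nat.zero_le _
          · rw [Finset.mem_range]; omega
        exact_mod_cast this

lemma sN_upper {m : ℕ} {γ : ℝ} (hm : 2 ≤ m) (hγ1 : 1 < γ)
    (hsum : ∑ i ∈ Finset.range m, γ⁻¹ ^ i = γ) (n : ℕ) :
    (sN m n : ℝ) ≤ γ ^ n / (γ - 1) := by
  have h1 : (sN m n : ℝ) ≤ ∑ ℓ ∈ Finset.range n, γ ^ ℓ := by
    rw [sN]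
    push_cast
    exact Finset.sum_le_sum (fun ℓ _ => cnt_le_geo hm hγ1 hsum ℓ)
  have h2 : ∑ ℓ ∈ Finset.range n, γ ^ ℓ = (γ ^ n - 1) / (γ - 1) := geom_sum_eq (by linarith) n
  have h3 : (γ ^ n - 1) / (γ - 1) ≤ γ ^ n / (γ - 1) := by
    gcongr
    · linarith
  linarith

/-! ### The tree-shift -/

/-- the age of a symbol: `0` and `1` are the free symbols of age 1; a symbol `i ≥ 2`
is the delay symbol of age `i` (with age `m+1` dead). -/
def ags (m : ℕ) (i : Fin (m + 2)) : ℕ := if (i : ℕ) ≤ 1 then 1 else i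

lemma ags_pos (m : ℕ) (i : Fin (m + 2)) : 1 ≤ ags m i := by
  unfold ags; split_ifs <;> omega

lemma ags_le (m : ℕ) (i : Fin (m + 2)) : ags m i ≤ m + 1 := by
  have := i.isLt
  unfold ags; split_ifs <;> omega

lemma ags_eq_of_two_le {m : ℕ} {i : Fin (m + 2)} (h : 2 ≤ ags m i) : (i : ℕ) = ags m i := by
  unfold ags at *
  split_ifs at h ⊢ <;> omega

lemma symb_det {m : ℕ} {i i' : Fin (m + 2)} (h : ags m i = ags m i') (h2 : 2 ≤ ags m i) :
    i = i' := by
  have e1 := ags_eq_of_two_le h2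
  have e2 := ags_eq_of_two_le (h ▸ h2)
  apply Fin.ext
  omega

/-- the basic set: children ages must follow the `stp` dynamics. -/
def Bset (m : ℕ) : Finset (Fin (m + 2) × (Fin 2 → Fin (m + 2))) :=
  Finset.univ.filter (fun p => ∀ j, ags m (p.2 j) = stp m (ags m p.1) j)

lemma block_constraint {m n : ℕ} {u : {w : List (Fin 2) // w.length < n} → Fin (m + 2)}
    (hu : u ∈ Block 2 (m + 2) (Bset m) n) (v : List (Fin 2)) (h : v.length + 2 ≤ n)
    (j : Fin 2) (hv : v.length < n) (hvj : (v ++ [j]).length < n) :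
    ags m (u ⟨v ++ [j], hvj⟩) = stp m (ags m (u ⟨v, hv⟩)) j := by
  have := hu v h
  rw [Bset, Finset.mem_filter] at this
  exact this.2 j

lemma mem_block_of_ages {m n : ℕ} {u : {w : List (Fin 2) // w.length < n} → Fin (m + 2)}
    (h : ∀ (v : List (Fin 2)) (hv : v.length < n) (j : Fin 2) (hvj : (v ++ [j]).length < n),
      ags m (u ⟨v ++ [j], hvj⟩) = stp m (ags m (u ⟨v, hv⟩)) j) :
    u ∈ Block 2 (m + 2) (Bset m) n := by
  intro v hv
  rw [Bset, Finset.mem_filter]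
  refine ⟨Finset.mem_univ _, fun j => ?_⟩
  exact h v (by omega) j (by simp; omega)

/-- ages of symbols in a block are fully determined by the root age. -/
lemma ags_det {m n : ℕ} {u : {w : List (Fin 2) // w.length < n} → Fin (m + 2)}
    (hu : u ∈ Block 2 (m + 2) (Bset m) n) (h0 : ([] : List (Fin 2)).length < n) :
    ∀ (v : List (Fin 2)) (h : v.length < n),
      ags m (u ⟨v, h⟩) = ag m (ags m (u ⟨[], h0⟩)) v := by
  intro v
  induction v using List.reverseRecOn with
  | nil => intro h; simp
  | append_singleton w j ih =>
    intro h
    have hw : w.length < n := by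
      have := h; simp at this; omega
    have h2 : w.length + 2 ≤ n := by
      have := h; simp at this; omega
    rw [block_constraint hu w h2 j hw h, ih hw, ag_concat]

/-! ### Finiteness instances -/

def allW (n : ℕ) : Finset (List (Fin 2)) := (Finset.range n).biUnion W

lemma mem_allW {n : ℕ} {v : List (Fin 2)} : v ∈ allW n ↔ v.length < n := by
  simp only [allW, Finset.mem_biUnion, Finset.mem_range, mem_W]
  constructor
  · rintro ⟨ℓ, h1, rfl⟩; exact h1
  · intro h; exact ⟨v.length, h, rfl⟩

instance domFintype (n : ℕ) : Fintype {w : List (Fin 2) // w.length < n} :=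
  Fintype.ofFinset (allW n) (fun _ => mem_allW)

/-- the free positions: words of length `< n` of age 1 (from root age 1). -/
def Sfin (m n : ℕ) : Finset (List (Fin 2)) :=
  (Finset.range n).biUnion (fun ℓ => (W ℓ).filter (fun v => ag m 1 v = 1))

lemma mem_Sfin {m n : ℕ} {v : List (Fin 2)} :
    v ∈ Sfin m n ↔ v.length < n ∧ ag m 1 v = 1 := by
  simp only [Sfin, Finset.mem_biUnion, Finset.mem_range, Finset.mem_filter, mem_W]
  constructor
  · rintro ⟨ℓ, h1, rfl, h3⟩; exact ⟨h1, h3⟩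
  · rintro ⟨h1, h2⟩; exact ⟨v.length, h1, rfl, h2⟩

lemma card_Sfin (m n : ℕ) : (Sfin m n).card = sN m n := by
  rw [Sfin, Finset.card_biUnion, sN]
  · rfl
  · intro i _ j _ hij
    simp only [Function.onFun]
    rw [Finset.disjoint_left]
    intro a ha ha'
    simp only [Finset.mem_filter, mem_W] at ha ha'
    omega

abbrev FreeT (m n : ℕ) := {v : List (Fin 2) // v.length < n ∧ ag m 1 v = 1}

instance freeFintype (m n : ℕ) : Fintype (FreeT m n) :=
  Fintype.ofFinset (Sfin m n) (fun _ => mem_Sfin)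

lemma card_FreeT (m n : ℕ) : Nat.card (FreeT m n) = sN m n := by
  rw [Nat.card_eq_fintype_card]
  rw [← card_Sfin m n]
  exact Fintype.card_ofFinset _ _

/-! ### Cardinality bounds for blocks -/

/-- lower bound injection: free bits embed into blocks. -/
def lowMap (m n : ℕ) (f : FreeT m n → Fin 2) :
    {w : List (Fin 2) // w.length < n} → Fin (m + 2) :=
  fun w =>
    if h : ag m 1 w.val = 1 then
      Fin.castLE (by omega) (f ⟨w.val, ⟨w.prop, h⟩⟩)
    else
      ⟨ag m 1 w.val, by have := ag_le m (by omega : (1:ℕ) ≤ m + 1) w.val; omega⟩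

lemma lowMap_ags (m n : ℕ) (f : FreeT m n → Fin 2) (w : {w : List (Fin 2) // w.length < n}) :
    ags m (lowMap m n f w) = ag m 1 w.val := by
  unfold lowMap
  split_ifs with h
  · have hv : ((Fin.castLE (by omega : 2 ≤ m + 2) (f ⟨w.val, ⟨w.prop, h⟩⟩)) : ℕ) ≤ 1 := by
      have := (f ⟨w.val, ⟨w.prop, h⟩⟩).isLt
      simp only [Fin.coe_castLE]
      omega
    rw [ags, if_pos hv, h]
  · have hpos := ag_pos m (le_refl 1) w.val
    rw [ags]
    simp only
    rw [if_neg (by omega)]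

lemma lowMap_mem (m n : ℕ) (f : FreeT m n → Fin 2) :
    lowMap m n f ∈ Block 2 (m + 2) (Bset m) n := by
  apply mem_block_of_ages
  intro v hv j hvj
  rw [lowMap_ags, lowMap_ags]
  exact ag_concat m 1 v j

lemma lowMap_inj (m n : ℕ) : Function.Injective (lowMap m n) := by
  intro f g hfg
  funext v
  have := congrFun hfg ⟨v.val, v.prop.1⟩
  unfold lowMap at this
  rw [dif_pos v.prop.2, dif_pos v.prop.2] at this
  have hval := congrArg Fin.val this
  simp only [Fin.coe_castLE] at hval
  exact Fin.ext hval

lemma card_block_lower (m n : ℕ) :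
    2 ^ sN m n ≤ Nat.card ↥(Block 2 (m + 2) (Bset m) n) := by
  have inj : Function.Injective
      (fun f : FreeT m n → Fin 2 => (⟨lowMap m n f, lowMap_mem m n f⟩ :
        ↥(Block 2 (m + 2) (Bset m) n))) := by
    intro f g h
    exact lowMap_inj m n (congrArg Subtype.val h)
  have := Nat.card_le_card_of_injective _ inj
  calc 2 ^ sN m n = Nat.card (FreeT m n → Fin 2) := by
        rw [Nat.card_fun, Nat.card_eq_fintype_card (α := Fin 2), card_FreeT]
        simp
    _ ≤ _ := this

lemma card_block_upper (m n : ℕ) (hn : 0 < n) :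
    Nat.card ↥(Block 2 (m + 2) (Bset m) n) ≤ (m + 2) ^ (sN m n + 1) := by
  have h0 : ([] : List (Fin 2)).length < n := by simpa using hn
  set Φ : ↥(Block 2 (m + 2) (Bset m) n) → Fin (m + 2) × (FreeT m n → Fin (m + 2)) :=
    fun u => (u.val ⟨[], h0⟩, fun v => u.val ⟨v.val, v.prop.1⟩) with hΦ
  have hinj : Function.Injective Φ := by
    intro u u' huu
    have hroot : u.val ⟨[], h0⟩ = u'.val ⟨[], h0⟩ := congrArg Prod.fst huu
    have hfree : ∀ v : FreeT m n, u.val ⟨v.val, v.prop.1⟩ = u'.val ⟨v.val, v.prop.1⟩ :=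
      fun v => congrFun (congrArg Prod.snd huu) v
    apply Subtype.ext
    funext w
    obtain ⟨v, hv⟩ := w
    have d1 := ags_det u.prop h0 v hv
    have d2 := ags_det u'.prop h0 v hv
    rw [hroot] at d1
    set b := ags m (u'.val ⟨[], h0⟩) with hb
    have hb1 : 1 ≤ b := ags_pos m _
    rcases le_or_gt 2 (ag m b v) with h2 | h2
    · exact symb_det (by rw [d1, d2]) (by omega : 2 ≤ ags m (u.val ⟨v, hv⟩))
    · have hge : 1 ≤ ag m b v := ag_pos m hb1 v
      have heq1 : ag m b v = 1 := by omega
      have hfree1 : ag m 1 v = 1 := by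
        have hle := ag_mono m hb1 v
        have := ag_pos m (le_refl 1) v
        omega
      exact hfree ⟨v, ⟨hv, hfree1⟩⟩
  have := Nat.card_le_card_of_injective _ hinj
  calc Nat.card ↥(Block 2 (m + 2) (Bset m) n)
      ≤ Nat.card (Fin (m + 2) × (FreeT m n → Fin (m + 2))) := this
    _ = (m + 2) ^ (sN m n + 1) := by
        rw [Nat.card_prod, Nat.card_fun, Nat.card_eq_fintype_card (α := Fin (m + 2)),
          card_FreeT]
        simp [pow_succ, mul_comm]

/-! ### Main limit computation -/

lemma hsum_of_hγ {m : ℕ} {γ : ℝ} (hγ1 : 1 < γ)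
    (hγ : ∑ j ∈ Finset.Icc 1 m, γ⁻¹ ^ j = 1) :
    ∑ i ∈ Finset.range m, γ⁻¹ ^ i = γ := by
  have hγ0 : (0:ℝ) < γ := by linarith
  have h1 : Finset.Icc 1 m = Finset.Ico 1 (m + 1) := by
    rw [Finset.Ico_add_one_right_eq_Icc]
  rw [h1, Finset.sum_Ico_eq_sum_range] at hγ
  simp only [Nat.add_sub_cancel] at hγ
  have h2 : ∑ i ∈ Finset.range m, γ⁻¹ ^ (1 + i) = γ⁻¹ * ∑ i ∈ Finset.range m, γ⁻¹ ^ i := by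
    rw [Finset.mul_sum]
    apply Finset.sum_congr rfl
    intro i _
    rw [pow_add, pow_one]
  rw [h2] at hγ
  have := congrArg (fun x => γ * x) hγ
  rw [← mul_assoc, mul_inv_cancel₀ (ne_of_gt hγ0), one_mul, mul_one] at this
  exact this


lemma main_tendsto {m : ℕ} {γ : ℝ} (hm : 2 ≤ m) (hγ1 : 1 < γ) (hγ2 : γ < 2)
    (hγ : ∑ j ∈ Finset.Icc 1 m, γ⁻¹ ^ j = 1) :
    Tendsto (fun n : ℕ =>
        Real.log (Real.log (Nat.card ↥(Block 2 (m + 2) (Bset m) n))) / n)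
      atTop (nhds (Real.log γ)) := by
  have hγ0 : (0:ℝ) < γ := by linarith
  have hsum := hsum_of_hγ hγ1 hγ
  set L := Real.log γ with hL
  set A : ℝ := Real.log (Real.log 2) - Real.log m with hA
  set C : ℝ := Real.log 2 + Real.log (Real.log ((m:ℝ) + 2)) - Real.log (γ - 1) with hC
  have hlog2 : (0:ℝ) < Real.log 2 := Real.log_pos (by norm_num)
  have hm2 : (2:ℝ) ≤ (m:ℝ) := by exact_mod_cast hm
  have hlogk : (0:ℝ) < Real.log ((m:ℝ) + 2) := Real.log_pos (by linarith)
  have hmpos : (0:ℝ) < (m:ℝ) := by linarith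
  have bound : ∀ n : ℕ, 1 ≤ n →
      (((n:ℝ) - 1) * L + A) / n ≤
        Real.log (Real.log (Nat.card ↥(Block 2 (m + 2) (Bset m) n))) / n ∧
      Real.log (Real.log (Nat.card ↥(Block 2 (m + 2) (Bset m) n))) / n ≤
        ((n:ℝ) * L + C) / n := by
    intro n hn
    have hs1 : (1:ℝ) ≤ (sN m n : ℝ) := by exact_mod_cast sN_pos m hn
    have hs0 : (0:ℝ) < (sN m n : ℝ) := by linarith
    have hclb : (2:ℝ) ^ (sN m n) ≤ (Nat.card ↥(Block 2 (m + 2) (Bset m) n) : ℝ) := by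
      exact_mod_cast card_block_lower m n
    have hcub : (Nat.card ↥(Block 2 (m + 2) (Bset m) n) : ℝ)
        ≤ ((m:ℝ) + 2) ^ (sN m n + 1) := by
      have h1 := card_block_upper m n hn
      have h2 : ((((m + 2) ^ (sN m n + 1) : ℕ)) : ℝ) = ((m:ℝ) + 2) ^ (sN m n + 1) := by
        push_cast; ring
      rw [← h2]
      exact_mod_cast h1
    set c : ℝ := (Nat.card ↥(Block 2 (m + 2) (Bset m) n) : ℝ) with hc
    have hc0 : (0:ℝ) < c := lt_of_lt_of_le (by positivity) hclb
    have hlogc_lb : (sN m n : ℝ) * Real.log 2 ≤ Real.log c := by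
      have h1 := Real.log_le_log (by positivity) hclb
      rw [Real.log_pow] at h1
      exact h1
    have hlogc_pos : (0:ℝ) < Real.log c := by
      have h2 : Real.log 2 ≤ (sN m n : ℝ) * Real.log 2 :=
        le_mul_of_one_le_left (le_of_lt hlog2) hs1
      linarith
    have hlogc_ub : Real.log c ≤ ((sN m n : ℝ) + 1) * Real.log ((m:ℝ) + 2) := by
      have h1 := Real.log_le_log hc0 hcub
      rw [Real.log_pow] at h1
      push_cast at h1
      linarith
    -- lower chain
    have hsl : γ ^ (n - 1) / (m:ℝ) ≤ (sN m n : ℝ) := by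
      have h1 := sN_lower hm hγ1 hsum hn
      rw [div_le_iff₀ hmpos]
      linarith
    have hn1cast : ((n - 1 : ℕ) : ℝ) = (n:ℝ) - 1 := by
      rw [Nat.cast_sub hn, Nat.cast_one]
    have hlogs_lb : ((n:ℝ) - 1) * L - Real.log m ≤ Real.log (sN m n : ℝ) := by
      have h1 := Real.log_le_log (by positivity) hsl
      rw [Real.log_div (by positivity) (ne_of_gt hmpos), Real.log_pow, hn1cast] at h1
      linarith
    have hloglog_lb : ((n:ℝ) - 1) * L + A ≤ Real.log (Real.log c) := by
      have h1 := Real.log_le_log (by positivity) hlogc_lb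
      rw [Real.log_mul (ne_of_gt hs0) (ne_of_gt hlog2)] at h1
      rw [hA]
      linarith
    -- upper chain
    have hsu : (sN m n : ℝ) ≤ γ ^ n / (γ - 1) := sN_upper hm hγ1 hsum n
    have hlogs_ub : Real.log (sN m n : ℝ) ≤ (n:ℝ) * L - Real.log (γ - 1) := by
      have h1 := Real.log_le_log hs0 hsu
      rw [Real.log_div (by positivity) (by intro h; nlinarith), Real.log_pow] at h1
      linarith
    have hlogc_ub2 : Real.log c ≤ 2 * (sN m n : ℝ) * Real.log ((m:ℝ) + 2) := by
      have h2 : ((sN m n : ℝ) + 1) * Real.log ((m:ℝ) + 2)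
          ≤ (2 * (sN m n : ℝ)) * Real.log ((m:ℝ) + 2) :=
        mul_le_mul_of_nonneg_right (by linarith) (le_of_lt hlogk)
      linarith
    have hloglog_ub : Real.log (Real.log c) ≤ (n:ℝ) * L + C := by
      have h1 := Real.log_le_log hlogc_pos hlogc_ub2
      rw [Real.log_mul (by positivity) (ne_of_gt hlogk),
        Real.log_mul (by norm_num) (ne_of_gt hs0)] at h1
      rw [hC]
      linarith
    have hn0 : (0:ℝ) < (n:ℝ) := by exact_mod_cast hn
    constructor
    · gcongr
    · gcongr
  have hLo : Tendsto (fun n : ℕ => (((n:ℝ) - 1) * L + A) / n) atTop (nhds L) := by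
    have h1 : Tendsto (fun n : ℕ => L + (A - L) / n) atTop (nhds (L + 0)) :=
      tendsto_const_nhds.add (tendsto_const_div_atTop_nhds_zero_nat (A - L))
    rw [add_zero] at h1
    apply h1.congr'
    filter_upwards [eventually_ge_atTop 1] with n hn
    have hn0 : ((n:ℝ)) ≠ 0 := by
      have : (0:ℝ) < (n:ℝ) := by exact_mod_cast hn
      linarith
    field_simp
    ring
  have hHi : Tendsto (fun n : ℕ => ((n:ℝ) * L + C) / n) atTop (nhds L) := by
    have h1 : Tendsto (fun n : ℕ => L + C / n) atTop (nhds (L + 0)) :=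
      tendsto_const_nhds.add (tendsto_const_div_atTop_nhds_zero_nat C)
    rw [add_zero] at h1
    apply h1.congr'
    filter_upwards [eventually_ge_atTop 1] with n hn
    have hn0 : ((n:ℝ)) ≠ 0 := by
      have : (0:ℝ) < (n:ℝ) := by exact_mod_cast hn
      linarith
    field_simp
  apply tendsto_of_tendsto_of_tendsto_of_le_of_le' hLo hHi
  · filter_upwards [eventually_ge_atTop 1] with n hn
    exact (bound n hn).1
  · filter_upwards [eventually_ge_atTop 1] with n hn
    exact (bound n hn).2

end MultinacciProof

/-- For every `m ≥ 2`, the multinacci number `γ_m` of order `m` — the unique real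
number in `(1,2)` with `γ⁻¹ + γ⁻² + ⋯ + γ⁻ᵐ = 1` — is realized: there are `d, k ≥ 2`
and a basic set `B` over `k` symbols on `d`-ary trees whose tree-shift has entropy
`ln γ_m`. -/
theorem multinacci_realization (m : ℕ) (hm : 2 ≤ m) (γ : ℝ)
    (hγ1 : 1 < γ) (hγ2 : γ < 2)
    (hγ : ∑ j ∈ Finset.Icc 1 m, γ⁻¹ ^ j = 1) :
    ∃ d k : ℕ, 2 ≤ d ∧ 2 ≤ k ∧
      ∃ B : Finset (Fin k × (Fin d → Fin k)),
        Tendsto (fun n : ℕ => Real.log (Real.log (Nat.card (Block d k B n))) / n)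
          atTop (nhds (Real.log γ)) := by
  refine ⟨2, m + 2, by norm_num, by omega, MultinacciProof.Bset m, ?_⟩
  exact MultinacciProof.main_tendsto hm hγ1 hγ2 hγ
end

section
/- Let B ⊆ A × A^d be a basic set and for i ∈ A write B^(i) = {w ∈ A^d : (i,w) ∈ B}. Suppose there exists l ∈ A such that B^(i) ⊆ B^(l) for all i ∈ A (i.e., the associated system of recurrences is of dominant type with dominant index l), that the constant word (l,l,…,l) belongs to B^(l), and that |B^(l)| ≥ 2. Then the entropy limit of X^B exists and equals ln d, i.e., ln(ln |B_n(X^B)|)/n → ln d as n → ∞. -/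
open Filter Real

section AuxCount

lemma mygeom_le {d : ℕ} (hd : 2 ≤ d) (n : ℕ) : ∑ i ∈ Finset.range n, d ^ i ≤ d ^ n := by
  induction n with
  | zero => simp
  | succ n ih =>
    rw [Finset.sum_range_succ, pow_succ]
    have : d ^ n * 2 ≤ d ^ n * d := Nat.mul_le_mul_left _ hd
    omega

instance T_finite (d n : ℕ) : Finite {w : List (Fin d) // w.length < n} :=
  (List.finite_length_lt (Fin d) n).to_subtype

instance L_finite (d m : ℕ) : Finite {w : List (Fin d) // w.length = m} :=
  (List.finite_length_eq (Fin d) m).to_subtype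

lemma card_T_le (d n : ℕ) (hd : 2 ≤ d) :
    Nat.card {w : List (Fin d) // w.length < n} ≤ d ^ n := by
  have hinj : Function.Injective
      (fun w : {w : List (Fin d) // w.length < n} =>
        (⟨⟨w.1.length, w.2⟩, fun j => w.1.get ⟨j.1, j.2⟩⟩ :
          Σ i : Fin n, (Fin i.1 → Fin d))) := by
    rintro ⟨w, hw⟩ ⟨w', hw'⟩ h
    rw [Sigma.ext_iff] at h
    simp only [Fin.mk.injEq] at h
    obtain ⟨h1, h2⟩ := h
    have h2' := (Fin.heq_fun_iff h1).mp h2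
    refine Subtype.ext (List.ext_get h1 fun i hi hi' => ?_)
    simpa using h2' ⟨i, hi⟩
  calc Nat.card {w : List (Fin d) // w.length < n}
      ≤ Nat.card (Σ i : Fin n, (Fin i.1 → Fin d)) :=
        Nat.card_le_card_of_injective _ hinj
    _ = ∑ i ∈ Finset.range n, d ^ i := by
        rw [Nat.card_eq_fintype_card, Fintype.card_sigma]
        simp [Fin.sum_univ_eq_sum_range]
    _ ≤ d ^ n := mygeom_le hd n

lemma card_lists_eq (d m : ℕ) :
    Nat.card {w : List (Fin d) // w.length = m} = d ^ m := by
  have h : Nat.card {w : List (Fin d) // w.length = m}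
      = Nat.card (List.Vector (Fin d) m) := rfl
  rw [h, Nat.card_eq_fintype_card, card_vector, Fintype.card_fin]

end AuxCount

section Low
variable {d k : ℕ} (B : Finset (Fin k × (Fin d → Fin k))) (l : Fin k) (m : ℕ)

/-- the raw labeling associated to a choice function on level-`m` nodes -/
def lab (f : {w : List (Fin d) // w.length = m} → {w : Fin d → Fin k // (l, w) ∈ B})
    (v : {w : List (Fin d) // w.length < m + 2}) : Fin k :=
  if h : v.1.length = m + 1 then
    (f ⟨v.1.dropLast, by simp [h]⟩).1
      (v.1.getLast (by intro he; rw [he] at h; simp at h))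
  else l

lemma lab_low (f) (v : {w : List (Fin d) // w.length < m + 2}) (hv : v.1.length ≤ m) :
    lab B l m f v = l := by
  rw [lab, dif_neg (by omega)]

lemma lab_high (f) (v : {w : List (Fin d) // w.length = m}) (j : Fin d)
    (h : (v.1 ++ [j]).length < m + 2) :
    lab B l m f ⟨v.1 ++ [j], h⟩ = (f v).1 j := by
  have hl : (v.1 ++ [j]).length = m + 1 := by simp [v.2]
  rw [lab, dif_pos hl]
  have e1 : (⟨(v.1 ++ [j]).dropLast, by simp [hl, v.2]⟩ : {w : List (Fin d) // w.length = m}) = v :=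
    Subtype.ext (List.dropLast_concat ..)
  rw [e1]
  simp

lemma lab_mem (hconst : (l, fun _ : Fin d => l) ∈ B) (f) :
    lab B l m f ∈ Block d k B (m + 2) := by
  intro v hv
  have hvm : v.length ≤ m := by omega
  have h1 : lab B l m f ⟨v, by omega⟩ = l := lab_low B l m f _ hvm
  rcases eq_or_lt_of_le hvm with he | hlt
  · have h2 : ∀ j : Fin d, lab B l m f ⟨v ++ [j], by simp; omega⟩ = (f ⟨v, he⟩).1 j := by
      intro j
      exact lab_high B l m f ⟨v, he⟩ j _
    rw [h1]
    simp only [h2]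
    exact (f ⟨v, he⟩).2
  · have h2 : ∀ j : Fin d, lab B l m f ⟨v ++ [j], by simp; omega⟩ = l := by
      intro j
      exact lab_low B l m f _ (by simp; omega)
    rw [h1]
    simp only [h2]
    exact hconst

lemma lab_inj : Function.Injective (lab B l m) := by
  intro f g h
  funext v
  refine Subtype.ext (funext fun j => ?_)
  have hlen : (v.1 ++ [j]).length < m + 2 := by simp [v.2]
  have := congr_fun h ⟨v.1 ++ [j], hlen⟩
  rwa [lab_high B l m f v j hlen, lab_high B l m g v j hlen] at this

end Low

lemma card_block_le_s13 {d k : ℕ} (hd : 2 ≤ d) (hk : 1 ≤ k)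
    (B : Finset (Fin k × (Fin d → Fin k))) (n : ℕ) :
    Nat.card (Block d k B n) ≤ k ^ d ^ n := by
  have h1 : Nat.card (Block d k B n)
      ≤ Nat.card ({w : List (Fin d) // w.length < n} → Fin k) :=
    Nat.card_le_card_of_injective Subtype.val Subtype.val_injective
  have h2 : Nat.card ({w : List (Fin d) // w.length < n} → Fin k)
      = k ^ Nat.card {w : List (Fin d) // w.length < n} := by
    rw [Nat.card_fun, Nat.card_eq_fintype_card, Fintype.card_fin]
  calc Nat.card (Block d k B n)
      ≤ k ^ Nat.card {w : List (Fin d) // w.length < n} := h2 ▸ h1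
    _ ≤ k ^ d ^ n := Nat.pow_le_pow_right hk (card_T_le d n hd)

lemma card_block_ge_s13 {d k : ℕ} (B : Finset (Fin k × (Fin d → Fin k))) (l : Fin k)
    (hconst : (l, fun _ : Fin d => l) ∈ B)
    (hcard : 2 ≤ (Finset.univ.filter fun w : Fin d → Fin k => (l, w) ∈ B).card) (m : ℕ) :
    2 ^ d ^ m ≤ Nat.card (Block d k B (m + 2)) := by
  have hCC : Nat.card {w : Fin d → Fin k // (l, w) ∈ B}
      = (Finset.univ.filter fun w : Fin d → Fin k => (l, w) ∈ B).card := by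
    rw [Nat.card_eq_fintype_card, Fintype.card_subtype]
  have hinj : Function.Injective
      (fun f : ({w : List (Fin d) // w.length = m} → {w : Fin d → Fin k // (l, w) ∈ B}) =>
        (⟨lab B l m f, lab_mem B l m hconst f⟩ : Block d k B (m + 2))) := fun f g h =>
    lab_inj B l m (congrArg Subtype.val h)
  have h1 : Nat.card ({w : List (Fin d) // w.length = m} → {w : Fin d → Fin k // (l, w) ∈ B})
      ≤ Nat.card (Block d k B (m + 2)) :=
    Nat.card_le_card_of_injective _ hinj
  rw [Nat.card_fun, card_lists_eq, hCC] at h1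
  calc 2 ^ d ^ m
      ≤ (Finset.univ.filter fun w : Fin d → Fin k => (l, w) ∈ B).card ^ d ^ m :=
        Nat.pow_le_pow_left hcard _
    _ ≤ _ := h1

/-- If the basic set `B` is of dominant type with dominant index `l` (every children-word
allowed under any symbol is allowed under `l`), the constant word `(l,…,l)` is allowed
under `l`, and `l` admits at least two children-words, then the entropy limit exists and
equals `ln d`. -/
theorem entropy_eq_log_d_of_dominant_with_full_degree (d k : ℕ) (hd : 2 ≤ d) (hk : 2 ≤ k)
    (B : Finset (Fin k × (Fin d → Fin k))) (l : Fin k)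
    (hdom : ∀ (i : Fin k) (w : Fin d → Fin k), (i, w) ∈ B → (l, w) ∈ B)
    (hconst : (l, fun _ : Fin d => l) ∈ B)
    (hcard : 2 ≤ (Finset.univ.filter fun w : Fin d → Fin k => (l, w) ∈ B).card) :
    Tendsto (fun n : ℕ => Real.log (Real.log (Nat.card (Block d k B n))) / n)
      atTop (nhds (Real.log d)) := by
  have hdR : (2:ℝ) ≤ (d:ℝ) := by exact_mod_cast hd
  have hkR : (2:ℝ) ≤ (k:ℝ) := by exact_mod_cast hk
  have hlogd : 0 < Real.log d := Real.log_pos (by linarith)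
  have hlog2 : 0 < Real.log 2 := Real.log_pos (by norm_num)
  have hlogk : 0 < Real.log k := Real.log_pos (by linarith)
  set c1 : ℝ := Real.log (Real.log 2) - 2 * Real.log d with hc1
  set c2 : ℝ := Real.log (Real.log k) with hc2
  have hlow : Tendsto (fun n : ℕ => Real.log d + c1 / n) atTop (nhds (Real.log d)) := by
    simpa using tendsto_const_nhds.add (tendsto_const_div_atTop_nhds_zero_nat c1)
  have hup : Tendsto (fun n : ℕ => Real.log d + c2 / n) atTop (nhds (Real.log d)) := by
    simpa using tendsto_const_nhds.add (tendsto_const_div_atTop_nhds_zero_nat c2)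
  have common : ∀ n : ℕ, 2 ≤ n →
      (((n:ℝ) - 2) * Real.log d + Real.log (Real.log 2)) / n
        ≤ Real.log (Real.log (Nat.card (Block d k B n))) / n ∧
      Real.log (Real.log (Nat.card (Block d k B n))) / n
        ≤ ((n:ℝ) * Real.log d + Real.log (Real.log k)) / n := by
    intro n hn
    have hnR : (0:ℝ) < (n:ℝ) := by exact_mod_cast Nat.lt_of_lt_of_le Nat.zero_lt_two hn
    set a : ℝ := ((Nat.card (Block d k B n) : ℕ) : ℝ) with ha
    have hlo : (2:ℝ) ^ d ^ (n - 2) ≤ a := by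
      have h := card_block_ge_s13 B l hconst hcard (n - 2)
      rw [Nat.sub_add_cancel hn] at h
      rw [ha]
      exact_mod_cast h
    have hup' : a ≤ (k:ℝ) ^ d ^ n := by
      have h := card_block_le_s13 hd (by omega) B n
      rw [ha]
      exact_mod_cast h
    have hapos : (0:ℝ) < a := lt_of_lt_of_le (by positivity) hlo
    have hL1 : ((d ^ (n - 2) : ℕ) : ℝ) * Real.log 2 ≤ Real.log a := by
      have h := Real.log_le_log (by positivity) hlo
      rw [Real.log_pow] at h
      push_cast
      exact_mod_cast h
    have hdpow : (0:ℝ) < ((d ^ (n - 2) : ℕ) : ℝ) := by positivity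
    have hL1pos : 0 < Real.log a := lt_of_lt_of_le (by positivity) hL1
    have hL2 : Real.log a ≤ ((d ^ n : ℕ) : ℝ) * Real.log k := by
      have h := Real.log_le_log hapos hup'
      rw [Real.log_pow] at h
      push_cast
      exact_mod_cast h
    have e1 : Real.log ((d ^ (n - 2) : ℕ) : ℝ) = ((n - 2 : ℕ) : ℝ) * Real.log d := by
      push_cast
      rw [Real.log_pow]
    have e2 : Real.log ((d ^ n : ℕ) : ℝ) = (n : ℝ) * Real.log d := by
      push_cast
      rw [Real.log_pow]
    have hLL1 : ((n - 2 : ℕ) : ℝ) * Real.log d + Real.log (Real.log 2)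
        ≤ Real.log (Real.log a) := by
      have h := Real.log_le_log (by positivity) hL1
      rwa [Real.log_mul (ne_of_gt hdpow) (ne_of_gt hlog2), e1] at h
    have hLL2 : Real.log (Real.log a)
        ≤ (n : ℝ) * Real.log d + Real.log (Real.log k) := by
      have h := Real.log_le_log hL1pos hL2
      have hdn : (0:ℝ) < ((d ^ n : ℕ) : ℝ) := by positivity
      rwa [Real.log_mul (ne_of_gt hdn) (ne_of_gt hlogk), e2] at h
    have hcast : ((n - 2 : ℕ) : ℝ) = (n : ℝ) - 2 := by
      push_cast [hn]
      ring
    rw [hcast] at hLL1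
    constructor
    · exact (div_le_div_iff_of_pos_right hnR).mpr hLL1
    · exact (div_le_div_iff_of_pos_right hnR).mpr hLL2
  refine tendsto_of_tendsto_of_tendsto_of_le_of_le' hlow hup ?_ ?_
  · filter_upwards [eventually_ge_atTop 2] with n hn
    have hnR : (0:ℝ) < (n:ℝ) := by exact_mod_cast Nat.lt_of_lt_of_le Nat.zero_lt_two hn
    have key : Real.log d + c1 / n
        = (((n:ℝ) - 2) * Real.log d + Real.log (Real.log 2)) / n := by
      rw [hc1]
      field_simp
      ring
    rw [key]
    exact (common n hn).1
  · filter_upwards [eventually_ge_atTop 2] with n hn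
    have hnR : (0:ℝ) < (n:ℝ) := by exact_mod_cast Nat.lt_of_lt_of_le Nat.zero_lt_two hn
    have key : Real.log d + c2 / n
        = ((n:ℝ) * Real.log d + Real.log (Real.log k)) / n := by
      rw [hc2]
      field_simp
    rw [key]
    exact (common n hn).2
end

section
/- Let B ⊆ A × A × A be a basic set whose entropy limit exists and is positive, say ln(ln c_n)/n → h with h > 0. Then the Neumann boundary entropy coincides with h, i.e., ln(ln |B_n^N|)/n → h as n → ∞, if and only if either (1) both (1,1,1) ∈ B and (2,2,2) ∈ B, or (2) there exists i ∈ {1,2} with (1,i,i) ∈ B and (2,i,i) ∈ B. -/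
open Filter Real

/-- `n`-blocks satisfying the Neumann boundary condition: every node of length `n-1`
(written `w ++ [j]` with `|w| = n-2`) carries the same label as its parent `w`. -/
def BlockN (B : Finset (Fin 2 × Fin 2 × Fin 2)) (n : ℕ) :
    Set ({w : List (Fin 2) // w.length < n} → Fin 2) :=
  {u | u ∈ Block2 B n ∧ ∀ (w : List (Fin 2)) (j : Fin 2) (h : w.length + 2 = n),
    u ⟨w ++ [j], by simp; omega⟩ = u ⟨w, by omega⟩}

/-- `n`-blocks satisfying the Dirichlet boundary condition with value `i`: every node
of length `n-1` is labeled `i`. -/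
def BlockD (B : Finset (Fin 2 × Fin 2 × Fin 2)) (i : Fin 2) (n : ℕ) :
    Set ({w : List (Fin 2) // w.length < n} → Fin 2) :=
  {u | u ∈ Block2 B n ∧ ∀ (w : List (Fin 2)) (h : w.length + 1 = n),
    u ⟨w, by omega⟩ = i}

/-- `n`-blocks satisfying the periodic boundary condition: every node of length `n-1`
carries the same label as the root. -/
def BlockP (B : Finset (Fin 2 × Fin 2 × Fin 2)) (n : ℕ) :
    Set ({w : List (Fin 2) // w.length < n} → Fin 2) :=
  {u | u ∈ Block2 B n ∧ ∀ (w : List (Fin 2)) (h : w.length + 1 = n),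
    u ⟨w, by omega⟩ = u ⟨[], by simp; omega⟩}

instance myFinDom (n : ℕ) : Finite {w : List (Fin 2) // w.length < n} :=
  (List.finite_length_lt (Fin 2) n).to_subtype

/-- extension by one level, copying parent labels -/
def myExt1 {n : ℕ} (hn : 0 < n) (u : {w : List (Fin 2) // w.length < n} → Fin 2) :
    {w : List (Fin 2) // w.length < n + 1} → Fin 2 :=
  fun w => if h : w.1.length < n then u ⟨w.1, h⟩
    else u ⟨w.1.dropLast, by have := w.2; simp only [List.length_dropLast]; omega⟩

lemma myInj1 (B : Finset (Fin 2 × Fin 2 × Fin 2)) {n : ℕ} (hn : 0 < n)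
    (hd : ∀ a : Fin 2, (a, a, a) ∈ B) :
    Nat.card (Block2 B n) ≤ Nat.card (BlockN B (n + 1)) := by
  have hmem : ∀ u : {w : List (Fin 2) // w.length < n} → Fin 2, u ∈ Block2 B n →
      myExt1 hn u ∈ BlockN B (n + 1) := by
    intro u hu
    constructor
    · intro v hv
      by_cases hc : v.length + 2 ≤ n
      · have h1 : v.length < n := by omega
        have h2 : (v ++ [(0 : Fin 2)]).length < n := by simp; omega
        have h3 : (v ++ [(1 : Fin 2)]).length < n := by simp; omega
        simp only [myExt1, dif_pos h1, dif_pos h2, dif_pos h3]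
        exact hu v hc
      · have h1 : v.length < n := by omega
        have h2 : ¬ (v ++ [(0 : Fin 2)]).length < n := by simp; omega
        have h3 : ¬ (v ++ [(1 : Fin 2)]).length < n := by simp; omega
        simp only [myExt1, dif_pos h1, dif_neg h2, dif_neg h3]
        have e0 : ∀ (p : ((v ++ [(0:Fin 2)]).dropLast).length < n),
            u ⟨(v ++ [(0:Fin 2)]).dropLast, p⟩ = u ⟨v, h1⟩ := fun p =>
          congrArg u (Subtype.ext (by simp))
        have e1 : ∀ (p : ((v ++ [(1:Fin 2)]).dropLast).length < n),
            u ⟨(v ++ [(1:Fin 2)]).dropLast, p⟩ = u ⟨v, h1⟩ := fun p =>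
          congrArg u (Subtype.ext (by simp))
        rw [e0, e1]
        exact hd _
    · intro w j hw
      have h1 : ¬ (w ++ [j]).length < n := by simp; omega
      have h2 : w.length < n := by omega
      simp only [myExt1, dif_neg h1, dif_pos h2]
      exact congrArg u (Subtype.ext (by simp))
  have hres : ∀ u : Block2 B n,
      (⟨myExt1 hn u.1, hmem u.1 u.2⟩ : BlockN B (n+1)) ∈ Set.univ := fun _ => trivial
  refine Nat.card_le_card_of_injective
    (fun u : Block2 B n => (⟨myExt1 hn u.1, hmem u.1 u.2⟩ : BlockN B (n+1))) ?_
  intro u v huv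
  apply Subtype.ext; funext ⟨w, hw⟩
  have h2 : myExt1 hn u.1 = myExt1 hn v.1 := congrArg Subtype.val huv
  have := congrFun h2 ⟨w, by omega⟩
  simpa only [myExt1, dif_pos hw] using this

/-- extension by two levels with constant label `i` -/
def myExt2 {n : ℕ} (i : Fin 2) (u : {w : List (Fin 2) // w.length < n} → Fin 2) :
    {w : List (Fin 2) // w.length < n + 2} → Fin 2 :=
  fun w => if h : w.1.length < n then u ⟨w.1, h⟩ else i

lemma myInj2 (B : Finset (Fin 2 × Fin 2 × Fin 2)) {n : ℕ} (i : Fin 2)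
    (h0 : ((0 : Fin 2), i, i) ∈ B) (h1 : ((1 : Fin 2), i, i) ∈ B) :
    Nat.card (Block2 B n) ≤ Nat.card (BlockN B (n + 2)) := by
  have hii : (i, i, i) ∈ B := by fin_cases i <;> assumption
  have hxi : ∀ x : Fin 2, (x, i, i) ∈ B := by intro x; fin_cases x <;> assumption
  have hmem : ∀ u : {w : List (Fin 2) // w.length < n} → Fin 2, u ∈ Block2 B n →
      myExt2 i u ∈ BlockN B (n + 2) := by
    intro u hu
    constructor
    · intro v hv
      by_cases hc : v.length + 2 ≤ n
      · have h1' : v.length < n := by omega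
        have h2 : (v ++ [(0 : Fin 2)]).length < n := by simp; omega
        have h3 : (v ++ [(1 : Fin 2)]).length < n := by simp; omega
        simp only [myExt2, dif_pos h1', dif_pos h2, dif_pos h3]
        exact hu v hc
      · have h2 : ¬ (v ++ [(0 : Fin 2)]).length < n := by simp; omega
        have h3 : ¬ (v ++ [(1 : Fin 2)]).length < n := by simp; omega
        by_cases h1' : v.length < n
        · simp only [myExt2, dif_pos h1', dif_neg h2, dif_neg h3]
          exact hxi _
        · simp only [myExt2, dif_neg h1', dif_neg h2, dif_neg h3]
          exact hii
    · intro w j hw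
      have h1' : ¬ (w ++ [j]).length < n := by simp; omega
      have h2 : ¬ w.length < n := by omega
      simp only [myExt2, dif_neg h1', dif_neg h2]
  refine Nat.card_le_card_of_injective
    (fun u : Block2 B n => (⟨myExt2 i u.1, hmem u.1 u.2⟩ : BlockN B (n+2))) ?_
  intro u v huv
  apply Subtype.ext; funext ⟨w, hw⟩
  have h2 : myExt2 i u.1 = myExt2 i v.1 := congrArg Subtype.val huv
  have := congrFun h2 ⟨w, by omega⟩
  simpa only [myExt2, dif_pos hw] using this

lemma myCardLeOne (B : Finset (Fin 2 × Fin 2 × Fin 2)) {n : ℕ} (hn : 2 ≤ n)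
    (hC : ¬ (((((0 : Fin 2), (0 : Fin 2), (0 : Fin 2)) ∈ B ∧
        ((1 : Fin 2), (1 : Fin 2), (1 : Fin 2)) ∈ B)) ∨
      ∃ i : Fin 2, ((0 : Fin 2), i, i) ∈ B ∧ ((1 : Fin 2), i, i) ∈ B)) :
    Nat.card (BlockN B n) ≤ 1 := by
  push_neg at hC
  obtain ⟨hC1, hC2⟩ := hC
  -- any two diagonal symbols agree
  have hS : ∀ a b : Fin 2, (a, a, a) ∈ B → (b, b, b) ∈ B → a = b := by
    intro a b ha hb
    fin_cases a <;> fin_cases b <;> first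
      | rfl
      | (exact absurd hb (hC1 ha)) | (exact absurd ha (hC1 hb))
  have hforce : ∀ x a : Fin 2, (a, a, a) ∈ B → (x, a, a) ∈ B → x = a := by
    intro x a ha hx
    fin_cases x <;> fin_cases a <;> first
      | rfl
      | (exact absurd ha (hC2 0 hx)) | (exact absurd hx (hC2 1 ha))
      | (exact absurd hx (hC2 0 ha)) | (exact absurd ha (hC2 1 hx))
  -- every interior node of a Neumann block carries a diagonal symbol
  have deep : ∀ u, u ∈ BlockN B n → ∀ d, ∀ w : List (Fin 2),
      ∀ hw : w.length + 2 + d = n,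
      (u ⟨w, by omega⟩, u ⟨w, by omega⟩, u ⟨w, by omega⟩) ∈ B := by
    intro u hu d
    induction d with
    | zero =>
      intro w hw
      have hblk := hu.1 w (by omega)
      have e0 := hu.2 w 0 (by omega)
      have e1 := hu.2 w 1 (by omega)
      rw [e0, e1] at hblk
      exact hblk
    | succ d ih =>
      intro w hw
      have ih0 := ih (w ++ [0]) (by simp; omega)
      have ih1 := ih (w ++ [1]) (by simp; omega)
      have hblk := hu.1 w (by omega)
      have heq := hS _ _ ih0 ih1
      set a := u ⟨w ++ [(0 : Fin 2)], by simp; omega⟩ with ha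
      -- u (w++[1]) = a
      have h1 : u ⟨w ++ [(1 : Fin 2)], by simp; omega⟩ = a := heq.symm
      rw [h1] at hblk
      have := hforce _ _ ih0 hblk
      rw [this]
      exact ih0
  -- subsingleton
  rw [Nat.card_coe_set_eq, Set.ncard_le_one_iff (Set.toFinite _)]
  intro u v hu hv
  funext ⟨w, hw⟩
  have key : ∀ u', u' ∈ BlockN B n → ∀ w' : List (Fin 2), ∀ hw' : w'.length + 2 ≤ n,
      ∀ w'' : List (Fin 2), ∀ hw'' : w''.length + 2 ≤ n,
      u' ⟨w', by omega⟩ = u' ⟨w'', by omega⟩ := by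
    intro u' hu' w' hw' w'' hw''
    exact hS _ _ (deep u' hu' (n - 2 - w'.length) w' (by omega))
      (deep u' hu' (n - 2 - w''.length) w'' (by omega))
  -- reduce any node to an interior node
  have red : ∀ u', u' ∈ BlockN B n → ∀ (w' : List (Fin 2)) (hw' : w'.length < n),
      u' ⟨w', hw'⟩ = u' ⟨[], by simp; omega⟩ := by
    intro u' hu' w' hw'
    by_cases hc : w'.length + 2 ≤ n
    · exact key u' hu' w' hc [] (by simpa using hn)
    · -- leaf : w'.length + 1 = n, so w' ≠ []
      have hne : w' ≠ [] := by intro h; rw [h] at hc; simp at hc; omega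
      have hdl : w'.dropLast.length + 2 = n := by
        rw [List.length_dropLast]
        have := List.length_pos_iff.mpr hne
        omega
      have hneu := hu'.2 w'.dropLast (w'.getLast hne) hdl
      have e : (⟨w'.dropLast ++ [w'.getLast hne], by simp; omega⟩ :
          {w : List (Fin 2) // w.length < n}) = ⟨w', hw'⟩ :=
        Subtype.ext (List.dropLast_append_getLast hne)
      rw [e] at hneu
      rw [hneu]
      exact key u' hu' w'.dropLast (by omega) [] (by simpa using hn)
  rw [red u hu w hw, red v hv w hw]
  exact hS _ _ (deep u hu (n-2) [] (by simp; omega)) (deep v hv (n-2) [] (by simp; omega))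

lemma myLogNatNonneg (m : ℕ) : 0 ≤ Real.log m := by
  rcases Nat.eq_zero_or_pos m with h | h
  · simp [h]
  · exact Real.log_nonneg (by exact_mod_cast h)

lemma myGtOne {x : ℝ} (hx0 : 0 ≤ x) (h : 0 < Real.log x) : 1 < x := by
  by_contra hle
  exact absurd (Real.log_nonpos hx0 (not_lt.1 hle)) (not_le.2 h)

lemma myLoglogLeUpper {a b : ℕ} (hab : a ≤ b) (hb : 1 < Real.log b) :
    Real.log (Real.log a) ≤ Real.log (Real.log b) := by
  by_cases ha : 2 ≤ a
  · have h1 : (1 : ℝ) < a := by exact_mod_cast ha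
    have hla : 0 < Real.log a := Real.log_pos h1
    have hab' : Real.log a ≤ Real.log b :=
      Real.log_le_log (by linarith) (by exact_mod_cast hab)
    exact Real.log_le_log hla hab'
  · have hz : Real.log (a : ℕ) = 0 := by
      interval_cases a <;> simp
    rw [hz, Real.log_zero]
    exact le_of_lt (Real.log_pos hb)

lemma myLoglogLeLower {a b : ℕ} (hab : a ≤ b) (ha : 1 < Real.log a) :
    Real.log (Real.log a) ≤ Real.log (Real.log b) := by
  have ha0 : (0 : ℝ) < a := by
    rcases Nat.eq_zero_or_pos a with h | h
    · rw [h] at ha; simp at ha; linarith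
    · exact_mod_cast h
  have hab' : Real.log a ≤ Real.log b := Real.log_le_log ha0 (by exact_mod_cast hab)
  exact Real.log_le_log (by linarith) hab'


/-- Suppose the entropy limit of the binary Markov tree-shift `X^B` exists and is
positive. Then the Neumann boundary entropy coincides with it iff either
`(1,1,1), (2,2,2) ∈ B`, or `(1,i,i), (2,i,i) ∈ B` for some symbol `i`.
(Symbols `1,2` are `0,1 : Fin 2`.) -/
theorem neumann_entropy_eq_iff (B : Finset (Fin 2 × Fin 2 × Fin 2)) (h : ℝ) (hpos : 0 < h)
    (hent : Tendsto (fun n : ℕ => Real.log (Real.log (Nat.card (Block2 B n))) / n)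
      atTop (nhds h)) :
    Tendsto (fun n : ℕ => Real.log (Real.log (Nat.card (BlockN B n))) / n)
        atTop (nhds h) ↔
      (((0 : Fin 2), (0 : Fin 2), (0 : Fin 2)) ∈ B ∧
        ((1 : Fin 2), (1 : Fin 2), (1 : Fin 2)) ∈ B) ∨
      ∃ i : Fin 2, ((0 : Fin 2), i, i) ∈ B ∧ ((1 : Fin 2), i, i) ∈ B := by
  constructor
  · intro htend
    by_contra hC
    have hzero : ∀ᶠ n : ℕ in atTop,
        Real.log (Real.log (Nat.card (BlockN B n))) / n = 0 := by
      filter_upwards [eventually_ge_atTop 2] with n hn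
      have hcard := myCardLeOne B hn hC
      have hl : Real.log (Nat.card (BlockN B n)) = 0 := by
        rcases Nat.le_one_iff_eq_zero_or_eq_one.mp hcard with h' | h' <;> simp [h']
      rw [hl, Real.log_zero, zero_div]
    have h0 : Tendsto (fun _ : ℕ => (0 : ℝ)) atTop (nhds h) := Tendsto.congr' hzero htend
    have := tendsto_nhds_unique h0 tendsto_const_nhds
    linarith
  · intro hcond
    -- eventual largeness of the block count
    have hev : ∀ᶠ m : ℕ in atTop, 1 < Real.log (Nat.card (Block2 B m)) := by
      have h1 := hent.eventually (eventually_gt_nhds (by linarith : h / 2 < h))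
      filter_upwards [h1, eventually_ge_atTop 1] with m hm hm1
      have hmpos : (0 : ℝ) < m := by exact_mod_cast hm1
      have hq : 0 < Real.log (Real.log (Nat.card (Block2 B m))) / m :=
        lt_trans (half_pos hpos) hm
      have hll : 0 < Real.log (Real.log (Nat.card (Block2 B m))) := by
        rcases div_pos_iff.mp hq with ⟨h1, _⟩ | ⟨_, h2⟩
        · exact h1
        · linarith
      exact myGtOne (myLogNatNonneg _) hll
    obtain ⟨k, hk1, hinj⟩ : ∃ k : ℕ, 1 ≤ k ∧ ∀ m : ℕ, 1 ≤ m →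
        Nat.card (Block2 B m) ≤ Nat.card (BlockN B (m + k)) := by
      rcases hcond with ⟨h00, h11⟩ | ⟨i, h0, h1⟩
      · exact ⟨1, le_refl _, fun m hm =>
          myInj1 B hm (fun a => by fin_cases a <;> assumption)⟩
      · exact ⟨2, by norm_num, fun m _ => myInj2 B i h0 h1⟩
    -- upper bound
    have hupper : ∀ᶠ n : ℕ in atTop,
        Real.log (Real.log (Nat.card (BlockN B n))) / n ≤
        Real.log (Real.log (Nat.card (Block2 B n))) / n := by
      filter_upwards [hev, eventually_ge_atTop 1] with n h1 hn1
      have hn0 : (0 : ℝ) < n := by exact_mod_cast hn1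
      have hNC : Nat.card (BlockN B n) ≤ Nat.card (Block2 B n) :=
        Nat.card_mono (Set.toFinite _) (fun u hu => hu.1)
      exact (div_le_div_iff_of_pos_right hn0).mpr (myLoglogLeUpper hNC h1)
    -- the shifted lower-bound sequence
    have hA : Tendsto (fun n : ℕ =>
        Real.log (Real.log (Nat.card (Block2 B (n - k)))) / (n - k : ℕ)) atTop (nhds h) :=
      hent.comp (tendsto_sub_atTop_nat k)
    have hB : Tendsto (fun n : ℕ => ((n - k : ℕ) : ℝ) / (n : ℝ)) atTop (nhds 1) := by
      have hs : Tendsto (fun n : ℕ => 1 - (k : ℝ) / n) atTop (nhds (1 - 0)) :=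
        tendsto_const_nhds.sub (tendsto_const_div_atTop_nhds_zero_nat (k : ℝ))
      refine Tendsto.congr' ?_ (by simpa using hs)
      filter_upwards [eventually_ge_atTop (k + 1)] with n hn
      have hn0 : (0 : ℝ) < n := by
        have : (1 : ℕ) ≤ n := by omega
        exact_mod_cast lt_of_lt_of_le Nat.zero_lt_one this
      rw [Nat.cast_sub (by omega), sub_div, div_self (ne_of_gt hn0)]
    have htendL : Tendsto (fun n : ℕ =>
        Real.log (Real.log (Nat.card (Block2 B (n - k)))) / n) atTop (nhds h) := by
      have hmul := hA.mul hB
      rw [mul_one] at hmul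
      refine Tendsto.congr' ?_ hmul
      filter_upwards [eventually_ge_atTop (k + 1)] with n hn
      have hc : ((n - k : ℕ) : ℝ) ≠ 0 := Nat.cast_ne_zero.mpr (by omega)
      rw [div_mul_div_comm, mul_comm (Real.log (Real.log (Nat.card (Block2 B (n - k))))),
        mul_div_mul_left _ _ hc]
    have hlow : ∀ᶠ n : ℕ in atTop,
        Real.log (Real.log (Nat.card (Block2 B (n - k)))) / n ≤
        Real.log (Real.log (Nat.card (BlockN B n))) / n := by
      filter_upwards [eventually_ge_atTop (k + 1),
        (tendsto_sub_atTop_nat k).eventually hev] with n hn hevn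
      have hn0 : (0 : ℝ) < n := by
        have : (1 : ℕ) ≤ n := by omega
        exact_mod_cast lt_of_lt_of_le Nat.zero_lt_one this
      have hineq : Nat.card (Block2 B (n - k)) ≤ Nat.card (BlockN B n) := by
        have := hinj (n - k) (by omega)
        rwa [Nat.sub_add_cancel (by omega)] at this
      exact (div_le_div_iff_of_pos_right hn0).mpr (myLoglogLeLower hineq hevn)
    exact tendsto_of_tendsto_of_tendsto_of_le_of_le' htendL hent hlow hupper
end

section
/- Let B ⊆ A × A × A be a basic set whose entropy limit exists and is positive, say ln(ln c_n)/n → h with h > 0, and let i ∈ {1,2} with ī = 3 − i. Then the Dirichlet boundary entropy with boundary value i coincides with h, i.e., ln(ln |B_n^{D_i}|)/n → h as n → ∞, if and only if either (1) both (1,i,i) ∈ B and (2,i,i) ∈ B, or (2) all three of (ī,i,i), (1,ī,ī), (2,ī,ī) belong to B. -/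
open Filter Real

instance aux_fin (n : ℕ) : Finite {w : List (Fin 2) // w.length < n} :=
  (List.finite_length_lt (α := Fin 2) (n := n))

-- uniqueness lemma
lemma aux_forced (B : Finset (Fin 2 × Fin 2 × Fin 2)) (i : Fin 2) (f : ℕ → Fin 2)
    (hf0 : f 0 = i) (H : ∀ k (a : Fin 2), (a, f k, f k) ∈ B → a = f (k + 1))
    (n : ℕ) (u : {w : List (Fin 2) // w.length < n} → Fin 2) (hu : u ∈ BlockD B i n) :
    ∀ (k : ℕ) (w : List (Fin 2)) (hw : w.length + k + 1 = n),
      u ⟨w, by omega⟩ = f k := by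
  intro k
  induction k with
  | zero => intro w hw; rw [hf0]; exact hu.2 w (by omega)
  | succ k ih =>
    intro w hw
    have hc0 := ih (w ++ [0]) (by simp; omega)
    have hc1 := ih (w ++ [1]) (by simp; omega)
    have hB := hu.1 w (by omega)
    rw [hc0, hc1] at hB
    exact H k _ hB

lemma aux_subsingleton (B : Finset (Fin 2 × Fin 2 × Fin 2)) (i : Fin 2) (f : ℕ → Fin 2)
    (hf0 : f 0 = i) (H : ∀ k (a : Fin 2), (a, f k, f k) ∈ B → a = f (k + 1))
    (n : ℕ) : Nat.card (BlockD B i n) ≤ 1 := by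
  rw [Finite.card_le_one_iff_subsingleton]
  constructor
  rintro ⟨u, hu⟩ ⟨u', hu'⟩
  ext ⟨w, hw⟩
  have h1 := aux_forced B i f hf0 H n u hu (n - 1 - w.length) w (by omega)
  have h2 := aux_forced B i f hf0 H n u' hu' (n - 1 - w.length) w (by omega)
  simp only [h1, h2]

-- card upper bound
lemma aux_upper (B : Finset (Fin 2 × Fin 2 × Fin 2)) (i : Fin 2) (n : ℕ) :
    Nat.card (BlockD B i n) ≤ Nat.card (Block2 B n) :=
  Nat.card_le_card_of_injective (Set.inclusion (fun _ hu => hu.1))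
    (Set.inclusion_injective _)

-- padding one level with i
lemma aux_lower1 (B : Finset (Fin 2 × Fin 2 × Fin 2)) (i : Fin 2)
    (hb : ∀ a : Fin 2, (a, i, i) ∈ B) (m : ℕ) :
    Nat.card (Block2 B m) ≤ Nat.card (BlockD B i (m + 1)) := by
  have key : ∀ u ∈ Block2 B m,
      (fun w : {w : List (Fin 2) // w.length < m + 1} =>
        if h : w.1.length < m then u ⟨w.1, h⟩ else i) ∈ BlockD B i (m + 1) := by
    intro u hu
    constructor
    · intro v hv
      simp only [List.length_append, List.length_cons, List.length_nil]
      split_ifs <;> first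
        | exact hu v (by omega)
        | exact hb _
        | (exfalso; omega)
    · intro w hw
      show (if h : w.length < m then u ⟨w, h⟩ else i) = i
      exact dif_neg (by omega)
  apply Nat.card_le_card_of_injective
    (fun u : Block2 B m => (⟨_, key u.1 u.2⟩ : BlockD B i (m + 1)))
  rintro ⟨u, hu⟩ ⟨u', hu'⟩ he
  simp only [Subtype.mk.injEq] at he ⊢
  funext ⟨w, hw⟩
  have := congrFun he ⟨w, by omega⟩
  simpa [dif_pos hw] using this

-- padding two levels: (1-i) then i
lemma aux_lower2 (B : Finset (Fin 2 × Fin 2 × Fin 2)) (i : Fin 2)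
    (hb1 : (1 - i, i, i) ∈ B) (hb2 : ∀ a : Fin 2, (a, 1 - i, 1 - i) ∈ B) (m : ℕ) :
    Nat.card (Block2 B m) ≤ Nat.card (BlockD B i (m + 2)) := by
  have key : ∀ u ∈ Block2 B m,
      (fun w : {w : List (Fin 2) // w.length < m + 2} =>
        if h : w.1.length < m then u ⟨w.1, h⟩
        else if w.1.length = m then 1 - i else i) ∈ BlockD B i (m + 2) := by
    intro u hu
    constructor
    · intro v hv
      simp only [List.length_append, List.length_cons, List.length_nil]
      split_ifs <;> first
        | exact hu v (by omega)
        | exact hb2 _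
        | exact hb1
        | (exfalso; omega)
    · intro w hw
      show (if h : w.length < m then u ⟨w, h⟩
        else if w.length = m then 1 - i else i) = i
      rw [dif_neg (by omega), if_neg (by omega)]
  apply Nat.card_le_card_of_injective
    (fun u : Block2 B m => (⟨_, key u.1 u.2⟩ : BlockD B i (m + 2)))
  rintro ⟨u, hu⟩ ⟨u', hu'⟩ he
  simp only [Subtype.mk.injEq] at he ⊢
  funext ⟨w, hw⟩
  have := congrFun he ⟨w, by omega⟩
  simpa [dif_pos hw] using this

lemma aux_arg {x : ℝ} (h0 : 0 ≤ x) (hx : 0 < Real.log x) : 1 < x := by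
  by_contra hc
  push_neg at hc
  have := Real.log_nonpos h0 hc
  linarith

lemma aux_tendsto (c d : ℕ → ℕ) (h : ℝ) (hpos : 0 < h)
    (hent : Tendsto (fun n : ℕ => Real.log (Real.log (c n)) / n) atTop (nhds h))
    (k : ℕ) (hl : ∀ m, c m ≤ d (m + k)) (hup : ∀ n, d n ≤ c n) :
    Tendsto (fun n : ℕ => Real.log (Real.log (d n)) / n) atTop (nhds h) := by
  have hev : ∀ᶠ n : ℕ in atTop, 0 < Real.log (Real.log (c n)) := by
    have h1 : ∀ᶠ n : ℕ in atTop, h / 2 < Real.log (Real.log (c n)) / n :=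
      hent.eventually (eventually_gt_nhds (by linarith))
    filter_upwards [h1, eventually_ge_atTop 1] with n hn hn1
    have hn0 : (0 : ℝ) < n := by exact_mod_cast hn1
    have hxp : 0 < Real.log (Real.log (c n)) / n := lt_trans (half_pos hpos) hn
    rcases div_pos_iff.mp hxp with ⟨h', _⟩ | ⟨_, h'⟩
    · exact h'
    · linarith
  obtain ⟨N, hN⟩ := eventually_atTop.1 hev
  have g1 : Tendsto (fun n : ℕ => Real.log (Real.log (c (n - k))) / ((n - k : ℕ) : ℝ))
      atTop (nhds h) := hent.comp (tendsto_sub_atTop_nat k)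
  have g2 : Tendsto (fun n : ℕ => ((n - k : ℕ) : ℝ) / (n : ℝ)) atTop (nhds 1) := by
    have h1 : Tendsto (fun n : ℕ => 1 - (k : ℝ) / n) atTop (nhds (1 - 0)) :=
      tendsto_const_nhds.sub (tendsto_const_div_atTop_nhds_zero_nat (k : ℝ))
    rw [sub_zero] at h1
    refine Tendsto.congr' ?_ h1
    filter_upwards [eventually_ge_atTop (k + 1)] with n hn
    have h2 : (n : ℝ) ≠ 0 := Nat.cast_ne_zero.2 (by omega)
    rw [Nat.cast_sub (by omega)]
    field_simp
  have glow : Tendsto (fun n : ℕ => Real.log (Real.log (c (n - k))) / n)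
      atTop (nhds h) := by
    have h3 := g1.mul g2
    rw [mul_one] at h3
    refine Tendsto.congr' ?_ h3
    filter_upwards [eventually_ge_atTop (k + 1)] with n hn
    have h1 : ((n - k : ℕ) : ℝ) ≠ 0 := Nat.cast_ne_zero.2 (by omega)
    have h2 : (n : ℝ) ≠ 0 := Nat.cast_ne_zero.2 (by omega)
    field_simp
  have key : ∀ᶠ n : ℕ in atTop,
      Real.log (Real.log (c (n - k))) / n ≤ Real.log (Real.log (d n)) / n ∧
      Real.log (Real.log (d n)) / n ≤ Real.log (Real.log (c n)) / n := by
    filter_upwards [eventually_ge_atTop (N + k + 1)] with n hn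
    have hm := hN (n - k) (by omega)
    have l1 : 1 < Real.log (c (n - k) : ℝ) := aux_arg (Real.log_natCast_nonneg _) hm
    have l2 : 1 < ((c (n - k) : ℕ) : ℝ) := aux_arg (by positivity) (by linarith)
    have hld : ((c (n - k) : ℕ) : ℝ) ≤ ((d n : ℕ) : ℝ) := by
      have h5 := hl (n - k)
      rw [Nat.sub_add_cancel (by omega)] at h5
      exact_mod_cast h5
    have hdc : ((d n : ℕ) : ℝ) ≤ ((c n : ℕ) : ℝ) := by exact_mod_cast hup n
    have m1 : Real.log (c (n - k) : ℝ) ≤ Real.log (d n : ℝ) :=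
      Real.log_le_log (by linarith) hld
    have m1' : Real.log (d n : ℝ) ≤ Real.log (c n : ℝ) :=
      Real.log_le_log (by linarith) hdc
    have m2 : Real.log (Real.log (c (n - k) : ℝ)) ≤ Real.log (Real.log (d n : ℝ)) :=
      Real.log_le_log (by linarith) m1
    have m2' : Real.log (Real.log (d n : ℝ)) ≤ Real.log (Real.log (c n : ℝ)) :=
      Real.log_le_log (by linarith) m1'
    have hn0 : (0 : ℝ) < n := by exact_mod_cast Nat.pos_of_ne_zero (by omega)
    exact ⟨(div_le_div_iff_of_pos_right hn0).2 m2, (div_le_div_iff_of_pos_right hn0).2 m2'⟩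
  exact tendsto_of_tendsto_of_tendsto_of_le_of_le' glow hent
    (key.mono fun n hn => hn.1) (key.mono fun n hn => hn.2)

/-- Suppose the entropy limit of the binary Markov tree-shift `X^B` exists and is
positive, and let `i` be a symbol with complementary symbol `1 - i`. Then the Dirichlet
boundary entropy with value `i` coincides with it iff either `(1,i,i), (2,i,i) ∈ B`, or
`(ī,i,i), (1,ī,ī), (2,ī,ī) ∈ B`. (Symbols `1,2` are `0,1 : Fin 2`, and `ī = 1 - i`.) -/
theorem dirichlet_entropy_eq_iff (B : Finset (Fin 2 × Fin 2 × Fin 2)) (h : ℝ)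
    (hpos : 0 < h)
    (hent : Tendsto (fun n : ℕ => Real.log (Real.log (Nat.card (Block2 B n))) / n)
      atTop (nhds h)) (i : Fin 2) :
    Tendsto (fun n : ℕ => Real.log (Real.log (Nat.card (BlockD B i n))) / n)
        atTop (nhds h) ↔
      (((0 : Fin 2), i, i) ∈ B ∧ ((1 : Fin 2), i, i) ∈ B) ∨
      ((1 - i, i, i) ∈ B ∧ ((0 : Fin 2), 1 - i, 1 - i) ∈ B ∧
        ((1 : Fin 2), 1 - i, 1 - i) ∈ B) := by
  have htwo : ∀ a : Fin 2, a = i ∨ a = 1 - i := by revert i; decide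
  constructor
  · intro hD
    by_contra hne
    push_neg at hne
    obtain ⟨hn1, hn2⟩ := hne
    set j := 1 - i with hj
    have hA : ¬(((i : Fin 2), i, i) ∈ B ∧ (j, i, i) ∈ B) := by
      rintro ⟨ha, hb⟩
      exact hn1 (by rcases htwo 0 with e | e <;> rw [e] <;> assumption)
        (by rcases htwo 1 with e | e <;> rw [e] <;> assumption)
    have hcard : ∀ n, Nat.card (BlockD B i n) ≤ 1 := by
      by_cases h1 : (j, i, i) ∈ B
      · have h2 : ((i : Fin 2), i, i) ∉ B := fun hii => hA ⟨hii, h1⟩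
        by_cases h3 : ((i : Fin 2), j, j) ∈ B
        · have h4 : (j, j, j) ∉ B := by
            intro hjj
            exact hn2 h1 (by rcases htwo 0 with e | e <;> rw [e] <;> assumption)
              (by rcases htwo 1 with e | e <;> rw [e] <;> assumption)
          refine aux_subsingleton B i (fun k => if k % 2 = 0 then i else j)
            (by simp) ?_
          intro k a hmem
          by_cases hk : k % 2 = 0
          · simp only [hk, if_true, if_pos] at hmem
            simp only [if_neg (show ¬(k + 1) % 2 = 0 by omega)]
            rcases htwo a with e | e
            · rw [e] at hmem; exact absurd hmem h2
            · exact e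
          · simp only [if_neg hk] at hmem
            simp only [if_pos (show (k + 1) % 2 = 0 by omega)]
            rcases htwo a with e | e
            · exact e
            · rw [e] at hmem; exact absurd hmem h4
        · refine aux_subsingleton B i (fun k => if k = 0 then i else j)
            (by simp) ?_
          intro k a hmem
          by_cases hk : k = 0
          · simp only [hk, if_true, if_pos] at hmem
            simp only [if_neg (Nat.succ_ne_zero k)]
            rcases htwo a with e | e
            · rw [e] at hmem; exact absurd hmem h2
            · exact e
          · simp only [if_neg hk] at hmem
            simp only [if_neg (Nat.succ_ne_zero k)]
            rcases htwo a with e | e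
            · rw [e] at hmem; exact absurd hmem h3
            · exact e
      · refine aux_subsingleton B i (fun _ => i) rfl ?_
        intro k a hmem
        rcases htwo a with e | e
        · exact e
        · rw [e] at hmem; exact absurd hmem h1
    have h0fun : (fun n : ℕ => Real.log (Real.log (Nat.card (BlockD B i n))) / n)
        = fun _ : ℕ => (0 : ℝ) := by
      funext n
      rcases Nat.le_one_iff_eq_zero_or_eq_one.mp (hcard n) with he | he <;>
        simp [he]
    rw [h0fun] at hD
    have := tendsto_nhds_unique hD tendsto_const_nhds
    linarith
  · rintro (⟨h0, h1⟩ | ⟨hb1, hb2, hb3⟩)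
    · have hb : ∀ a : Fin 2, (a, i, i) ∈ B := by
        intro a
        rcases (show ∀ a : Fin 2, a = 0 ∨ a = 1 by decide) a with e | e <;>
          rw [e] <;> assumption
      exact aux_tendsto (fun n => Nat.card (Block2 B n))
        (fun n => Nat.card (BlockD B i n)) h hpos hent 1
        (fun m => aux_lower1 B i hb m) (fun n => aux_upper B i n)
    · have hb : ∀ a : Fin 2, (a, 1 - i, 1 - i) ∈ B := by
        intro a
        rcases (show ∀ a : Fin 2, a = 0 ∨ a = 1 by decide) a with e | e <;>
          rw [e] <;> assumption
      exact aux_tendsto (fun n => Nat.card (Block2 B n))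
        (fun n => Nat.card (BlockD B i n)) h hpos hent 2
        (fun m => aux_lower2 B i hb1 hb m) (fun n => aux_upper B i n)
end
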